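/- arXiv:2105.01518 — 6 statements merged into one kernel-verified Lean document; each statement's English description precedes it below -/
import Mathlib

section
/- Let W be the Weyl group of type C_n and i ∈ [n]. A coroot γ^∨ associated with a positive root γ ∈ Δ^+ ∖ Δ_{I∖{i}}^+ satisfies ⟨γ^∨, α⟩ ∈ {−1, 0} for all α ∈ Δ_{I∖{i}}^+ if and only if γ^∨ = ε_i (i.e., γ^∨ = α_i^∨ + α_{i+1}^∨ + ⋯ + α_n^∨) or γ^∨ = ε_{i−1} + ε_i (i.e., γ^∨ = α_{i−1}^∨ + 2α_i^∨ + ⋯ + 2α_n^∨, only when i ≥ 2). -/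
/-- Standard dot product on `ℚ^n` (the `ε_s` form an orthonormal basis). -/
def dotV {n : ℕ} (x y : Fin n → ℚ) : ℚ := ∑ j, x j * y j

/-- The coroot `γ^∨ = 2γ / ⟨γ,γ⟩` of a root `γ`, identified with a vector of `ℚ^n`
via the dot product. -/
def corootV {n : ℕ} (γ : Fin n → ℚ) : Fin n → ℚ := (2 / dotV γ γ) • γ

/-- The positive roots of type `C_n`:
`Δ^+ = {ε_s ± ε_t : s < t} ∪ {2ε_s}` (0-based indices). -/
def posC (n : ℕ) : Set (Fin n → ℚ) :=
  {γ | ∃ s t : Fin n, s < t ∧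
      (γ = Pi.single s 1 - Pi.single t 1 ∨ γ = Pi.single s 1 + Pi.single t 1)} ∪
  {γ | ∃ s : Fin n, γ = (2 : ℚ) • (Pi.single s 1 : Fin n → ℚ)}

/-- The simple roots of type `C_n` (1-based index `j ∈ [n]`):
`α_j = ε_j − ε_{j+1}` for `j < n` and `α_n = 2ε_n`. -/
def alC (n : ℕ) : ℕ → (Fin n → ℚ) := fun j =>
  if h : 1 ≤ j ∧ j < n then
    Pi.single (⟨j - 1, by omega⟩ : Fin n) 1 - Pi.single (⟨j, by omega⟩ : Fin n) 1
  else if h2 : j = n ∧ 1 ≤ n then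
    (2 : ℚ) • (Pi.single (⟨n - 1, by omega⟩ : Fin n) 1 : Fin n → ℚ)
  else 0

/-- The positive roots of `Δ_{I∖{i}}`: positive roots lying in the span of the simple
roots `α_j`, `j ≠ i`. -/
def posCJ (n i : ℕ) : Set (Fin n → ℚ) :=
  {γ ∈ posC n |
    γ ∈ (Submodule.span ℚ (alC n '' {j | 1 ≤ j ∧ j ≤ n ∧ j ≠ i}) : Submodule ℚ (Fin n → ℚ))}

namespace CproofAux
variable {n : ℕ}

lemma dotV_single_right (x : Fin n → ℚ) (t : Fin n) : dotV x (Pi.single t 1) = x t := by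
  simp [dotV, Pi.single_apply, mul_ite]

lemma dotV_sub_right (x y z : Fin n → ℚ) : dotV x (y - z) = dotV x y - dotV x z := by
  simp [dotV, mul_sub, Finset.sum_sub_distrib]

lemma dotV_add_right (x y z : Fin n → ℚ) : dotV x (y + z) = dotV x y + dotV x z := by
  simp [dotV, mul_add, Finset.sum_add_distrib]

lemma dotV_smul_right (x y : Fin n → ℚ) (c : ℚ) : dotV x (c • y) = c * dotV x y := by
  simp [dotV, Finset.mul_sum, mul_comm, mul_assoc, mul_left_comm]

lemma coroot_sub (s t : Fin n) (h : s ≠ t) :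
    corootV (Pi.single s 1 - Pi.single t 1) = Pi.single s 1 - Pi.single t 1 := by
  have hd : dotV (Pi.single s 1 - Pi.single t 1) (Pi.single s (1:ℚ) - Pi.single t 1) = 2 := by
    rw [dotV_sub_right, dotV_single_right, dotV_single_right]
    simp [Pi.single_apply, h, h.symm]; norm_num
  rw [corootV, hd]; norm_num

lemma coroot_add (s t : Fin n) (h : s ≠ t) :
    corootV (Pi.single s 1 + Pi.single t 1) = Pi.single s 1 + Pi.single t 1 := by
  have hd : dotV (Pi.single s 1 + Pi.single t 1) (Pi.single s (1:ℚ) + Pi.single t 1) = 2 := by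
    rw [dotV_add_right, dotV_single_right, dotV_single_right]
    simp [Pi.single_apply, h, h.symm]; norm_num
  rw [corootV, hd]; norm_num

lemma coroot_two (s : Fin n) :
    corootV ((2:ℚ) • (Pi.single s 1 : Fin n → ℚ)) = Pi.single s 1 := by
  have hd : dotV ((2:ℚ) • (Pi.single s 1 : Fin n → ℚ)) ((2:ℚ) • (Pi.single s 1 : Fin n → ℚ)) = 4 := by
    rw [dotV_smul_right]
    simp [dotV, Pi.single_apply, mul_ite]; norm_num
  rw [corootV, hd]
  ext j; simp [Pi.smul_apply]; ring

lemma alC_lt (j : ℕ) (h1 : 1 ≤ j) (h2 : j < n) :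
    alC n j = Pi.single (⟨j - 1, by omega⟩ : Fin n) 1 - Pi.single (⟨j, h2⟩ : Fin n) 1 := by
  rw [alC, dif_pos ⟨h1, h2⟩]

lemma alC_n (h : 1 ≤ n) :
    alC n n = (2 : ℚ) • (Pi.single (⟨n - 1, by omega⟩ : Fin n) 1 : Fin n → ℚ) := by
  rw [alC, dif_neg (by omega), dif_pos ⟨rfl, h⟩]

lemma alC_mem (i j : ℕ) (h1 : 1 ≤ j) (h2 : j ≤ n) (h3 : j ≠ i) :
    alC n j ∈ Submodule.span ℚ (alC n '' {j | 1 ≤ j ∧ j ≤ n ∧ j ≠ i}) :=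
  Submodule.subset_span ⟨j, ⟨h1, h2, h3⟩, rfl⟩

lemma chain_mem (i : ℕ) : ∀ (d a : ℕ) (h : a + d < n),
    (∀ j, a < j → j ≤ a + d → j ≠ i) →
    Pi.single (⟨a, by omega⟩ : Fin n) 1 - Pi.single (⟨a + d, h⟩ : Fin n) 1 ∈
      Submodule.span ℚ (alC n '' {j | 1 ≤ j ∧ j ≤ n ∧ j ≠ i}) := by
  intro d
  induction d with
  | zero => intro a h _; simp
  | succ d ih =>
    intro a h hj
    have h' : a + d < n := by omega
    have m1 := ih a h' (fun j hj1 hj2 => hj j hj1 (by omega))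
    have m2 := alC_mem (n := n) i (a + d + 1) (by omega) (by omega)
      (hj (a + d + 1) (by omega) (by omega))
    have key : Pi.single (⟨a, by omega⟩ : Fin n) (1:ℚ) - Pi.single (⟨a + (d+1), h⟩ : Fin n) 1
        = (Pi.single (⟨a, by omega⟩ : Fin n) 1 - Pi.single (⟨a + d, h'⟩ : Fin n) 1)
          + alC n (a + d + 1) := by
      rw [alC_lt (a + d + 1) (by omega) (by omega)]
      have e1 : (⟨a + d + 1 - 1, by omega⟩ : Fin n) = ⟨a + d, h'⟩ := by
        apply Fin.ext; simp
      have e2 : (⟨a + (d+1), h⟩ : Fin n) = ⟨a + d + 1, by omega⟩ := by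
        apply Fin.ext; simp [Nat.add_assoc]
      rw [e1, e2]; abel
    rw [key]
    exact Submodule.add_mem _ m1 m2

lemma twoeps_mem (i : ℕ) (s : Fin n) (hs : i ≤ s.val) :
    (2:ℚ) • (Pi.single s 1 : Fin n → ℚ) ∈
      Submodule.span ℚ (alC n '' {j | 1 ≤ j ∧ j ≤ n ∧ j ≠ i}) := by
  have hn : 1 ≤ n := by omega
  have h1 : s.val + (n - 1 - s.val) < n := by omega
  have m1 := chain_mem i (n - 1 - s.val) s.val h1 (fun j hj1 hj2 => by omega)
  have m2 := alC_mem (n := n) i n (by omega) le_rfl (by omega)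
  rw [alC_n hn] at m2
  have e1 : (⟨s.val, by omega⟩ : Fin n) = s := Fin.eta s _
  have e2 : (⟨s.val + (n - 1 - s.val), h1⟩ : Fin n) = ⟨n - 1, by omega⟩ := by
    apply Fin.ext; simp; omega
  rw [e1, e2] at m1
  have key : (2:ℚ) • (Pi.single s 1 : Fin n → ℚ)
      = (2:ℚ) • ((Pi.single s 1 : Fin n → ℚ) - Pi.single ⟨n - 1, by omega⟩ 1)
        + (2:ℚ) • (Pi.single (⟨n - 1, by omega⟩ : Fin n) 1 : Fin n → ℚ) := by
    rw [smul_sub]; abel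
  rw [key]
  exact Submodule.add_mem _ (Submodule.smul_mem _ _ m1) m2

lemma sum_single_filter (i : ℕ) (s : Fin n) :
    ∑ j ∈ Finset.univ.filter (fun j : Fin n => j.val < i), (Pi.single s (1:ℚ)) j
      = if s.val < i then 1 else 0 := by
  by_cases hs : s.val < i
  · rw [if_pos hs, Finset.sum_eq_single s]
    · simp
    · intro b _ hb; simp [Pi.single_apply, hb]
    · intro hc; simp [hs] at hc
  · rw [if_neg hs]
    apply Finset.sum_eq_zero
    intro b hb
    simp only [Finset.mem_filter] at hb
    have hbs : b ≠ s := fun h => hs (h ▸ hb.2)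
    simp [Pi.single_apply, hbs]

lemma span_sum_zero (i : ℕ) (hi2 : i ≤ n) (x : Fin n → ℚ)
    (hx : x ∈ Submodule.span ℚ (alC n '' {j | 1 ≤ j ∧ j ≤ n ∧ j ≠ i})) :
    ∑ j ∈ Finset.univ.filter (fun j : Fin n => j.val < i), x j = 0 := by
  induction hx using Submodule.span_induction with
  | mem y hy =>
    obtain ⟨j, ⟨h1, h2, h3⟩, rfl⟩ := hy
    by_cases hjn : j < n
    · rw [alC_lt j h1 hjn]
      simp only [Pi.sub_apply, Finset.sum_sub_distrib, sum_single_filter]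
      rcases lt_or_gt_of_ne h3 with hji | hji
      · simp [show j - 1 < i by omega, show j < i by omega]
      · simp [show ¬ (j - 1 < i) by omega, show ¬ (j < i) by omega]
    · have hjeq : j = n := by omega
      rw [hjeq, alC_n (by omega)]
      simp only [Pi.smul_apply, smul_eq_mul, ← Finset.mul_sum, sum_single_filter]
      simp [show ¬ (n - 1 < i) by omega]
  | zero => simp
  | add a b _ _ ha hb => simp [Finset.sum_add_distrib, ha, hb]
  | smul c a _ ha => simp [← Finset.mul_sum, ha]

lemma mem_posCJ_sub (i : ℕ) (a b : Fin n) (hab : a < b) (hc : b.val < i ∨ i ≤ a.val) :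
    (Pi.single a 1 - Pi.single b 1 : Fin n → ℚ) ∈ posCJ n i := by
  have habv : a.val < b.val := hab
  refine ⟨Or.inl ⟨a, b, hab, Or.inl rfl⟩, ?_⟩
  have h : a.val + (b.val - a.val) < n := by omega
  have m := chain_mem i (b.val - a.val) a.val h (fun j h1 h2 => by rcases hc with hc | hc <;> omega)
  have e1 : (⟨a.val, by omega⟩ : Fin n) = a := Fin.eta a _
  have e2 : (⟨a.val + (b.val - a.val), h⟩ : Fin n) = b := by
    apply Fin.ext; simp; omega
  rwa [e1, e2] at m

lemma mem_posCJ_two (i : ℕ) (t : Fin n) (ht : i ≤ t.val) :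
    ((2:ℚ) • (Pi.single t 1 : Fin n → ℚ)) ∈ posCJ n i :=
  ⟨Or.inr ⟨t, rfl⟩, twoeps_mem i t ht⟩

lemma singleApp (a b : Fin n) :
    (Pi.single a 1 : Fin n → ℚ) b = if b.val = a.val then 1 else 0 := by
  simp [Pi.single_apply, Fin.ext_iff]

lemma singleApp_mk (m : ℕ) (h : m < n) (b : Fin n) :
    (Pi.single (⟨m, h⟩ : Fin n) 1 : Fin n → ℚ) b = if b.val = m then 1 else 0 := singleApp _ _

end CproofAux

open CproofAux

/-- Let `W` be the Weyl group of type `C_n` and `i ∈ [n]`.  A coroot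
`γ^∨` associated with a positive root `γ ∈ Δ^+ ∖ Δ_{I∖{i}}^+` satisfies
`⟨γ^∨, α⟩ ∈ {−1, 0}` for all `α ∈ Δ_{I∖{i}}^+` if and only if `γ^∨ = ε_i` or
(when `i ≥ 2`) `γ^∨ = ε_{i−1} + ε_i`. -/
theorem typeC_QveeJ_criterion (n i : ℕ) (hn : 2 ≤ n) (hi1 : 1 ≤ i) (hi2 : i ≤ n)
    (γ : Fin n → ℚ) (hγ : γ ∈ posC n) (hγ' : γ ∉ posCJ n i) :
    (∀ α ∈ posCJ n i, dotV (corootV γ) α ∈ ({-1, 0} : Set ℚ)) ↔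
      (corootV γ = Pi.single (⟨i - 1, by omega⟩ : Fin n) 1 ∨
        (2 ≤ i ∧ corootV γ =
          Pi.single (⟨i - 2, by omega⟩ : Fin n) 1 + Pi.single (⟨i - 1, by omega⟩ : Fin n) 1)) := by
  constructor
  · intro h
    rcases hγ with ⟨s, t, hst, hpm⟩ | ⟨s, rfl⟩
    · have hstv : s.val < t.val := hst
      have hne : s ≠ t := ne_of_lt hst
      rcases hpm with rfl | rfl
      · -- γ = ε_s − ε_t : impossible
        exfalso
        by_cases hti : t.val < i
        · exact hγ' (mem_posCJ_sub i s t hst (Or.inl hti))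
        · have hα := h _ (mem_posCJ_two i t (by omega))
          rw [coroot_sub s t hne, dotV_smul_right, dotV_single_right] at hα
          simp only [Pi.sub_apply, singleApp_mk, singleApp, Set.mem_insert_iff,
            Set.mem_singleton_iff] at hα
          split_ifs at hα <;> norm_num at hα <;> omega
      · -- γ = ε_s + ε_t
        by_cases hti : i ≤ t.val
        · exfalso
          have hα := h _ (mem_posCJ_two i t hti)
          rw [coroot_add s t hne, dotV_smul_right, dotV_single_right] at hα
          simp only [Pi.add_apply, singleApp_mk, singleApp, Set.mem_insert_iff,
            Set.mem_singleton_iff] at hα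
          split_ifs at hα <;> norm_num at hα <;> omega
        · push_neg at hti
          by_cases ht2 : t.val < i - 1
          · exfalso
            have hmem := mem_posCJ_sub i t ⟨i - 1, by omega⟩
              (by rw [Fin.lt_def]; exact ht2) (Or.inl (show i - 1 < i by omega))
            have hα := h _ hmem
            rw [coroot_add s t hne, dotV_sub_right, dotV_single_right, dotV_single_right] at hα
            simp only [Pi.add_apply, singleApp_mk, singleApp, Set.mem_insert_iff,
              Set.mem_singleton_iff] at hα
            split_ifs at hα <;> norm_num at hα <;> omega
          · have htv : t.val = i - 1 := by omega
            by_cases hs2 : s.val < i - 2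
            · exfalso
              have hmem := mem_posCJ_sub i s ⟨i - 2, by omega⟩
                (by rw [Fin.lt_def]; exact hs2) (Or.inl (show i - 2 < i by omega))
              have hα := h _ hmem
              rw [coroot_add s t hne, dotV_sub_right, dotV_single_right, dotV_single_right] at hα
              simp only [Pi.add_apply, singleApp_mk, singleApp, Set.mem_insert_iff,
                Set.mem_singleton_iff] at hα
              split_ifs at hα <;> norm_num at hα <;> omega
            · have hsv : s.val = i - 2 := by omega
              refine Or.inr ⟨by omega, ?_⟩
              rw [coroot_add s t hne]
              have es : s = (⟨i - 2, by omega⟩ : Fin n) := Fin.ext (show s.val = i - 2 from hsv)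
              have et : t = (⟨i - 1, by omega⟩ : Fin n) := Fin.ext (show t.val = i - 1 from htv)
              rw [es, et]
    · -- γ = 2 ε_s
      by_cases hsi : i ≤ s.val
      · exact absurd (mem_posCJ_two i s hsi) hγ'
      · push_neg at hsi
        by_cases hs2 : s.val < i - 1
        · exfalso
          have hmem := mem_posCJ_sub i s ⟨i - 1, by omega⟩
            (by rw [Fin.lt_def]; exact hs2) (Or.inl (show i - 1 < i by omega))
          have hα := h _ hmem
          rw [coroot_two s, dotV_sub_right, dotV_single_right, dotV_single_right] at hα
          simp only [singleApp_mk, singleApp, Set.mem_insert_iff,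
            Set.mem_singleton_iff] at hα
          split_ifs at hα <;> norm_num at hα <;> omega
        · have hsv : s.val = i - 1 := by omega
          left
          rw [coroot_two s]
          have es : s = (⟨i - 1, by omega⟩ : Fin n) := Fin.ext (show s.val = i - 1 from hsv)
          rw [es]
  · intro h α hα
    obtain ⟨hpos, hspan⟩ := hα
    have hsum := span_sum_zero i hi2 α hspan
    rcases hpos with ⟨s, t, hst, hpm⟩ | ⟨s, rfl⟩
    · have hstv : s.val < t.val := hst
      rcases hpm with rfl | rfl
      · -- α = ε_s − ε_t
        simp only [Pi.sub_apply, Finset.sum_sub_distrib, sum_single_filter] at hsum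
        rcases h with hc | ⟨hii, hc⟩ <;> rw [hc, dotV_sub_right, dotV_single_right,
            dotV_single_right] <;>
          simp only [Pi.add_apply, Pi.sub_apply, singleApp_mk, singleApp, Set.mem_insert_iff,
            Set.mem_singleton_iff] <;>
          split_ifs at hsum ⊢ <;> norm_num at hsum <;> norm_num <;> omega
      · -- α = ε_s + ε_t
        simp only [Pi.add_apply, Finset.sum_add_distrib, sum_single_filter] at hsum
        rcases h with hc | ⟨hii, hc⟩ <;> rw [hc, dotV_add_right, dotV_single_right,
            dotV_single_right] <;>
          simp only [Pi.add_apply, Pi.sub_apply, singleApp_mk, singleApp, Set.mem_insert_iff,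
            Set.mem_singleton_iff] <;>
          split_ifs at hsum ⊢ <;> norm_num at hsum <;> norm_num <;> omega
    · -- α = 2 ε_s
      simp only [Pi.smul_apply, smul_eq_mul, ← Finset.mul_sum, sum_single_filter] at hsum
      rcases h with hc | ⟨hii, hc⟩ <;> rw [hc, dotV_smul_right, dotV_single_right] <;>
        simp only [Pi.add_apply, Pi.sub_apply, singleApp_mk, singleApp, Set.mem_insert_iff,
          Set.mem_singleton_iff] <;>
        split_ifs at hsum ⊢ <;> norm_num at hsum <;> norm_num <;> omega
end

section
/- In type C_n, for i ∈ [n], one has 2⟨α_i^∨, ρ − ρ_{I∖{i}}⟩ = 2n − i + 1, where ρ (resp. ρ_{I∖{i}}) is half the sum of positive roots of Δ (resp. of Δ_{I∖{i}}). -/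
/-- The positive roots of type `C_n` as a `Finset`. -/
noncomputable def posFinsetC (n : ℕ) : Finset (Fin n → ℚ) :=
  ((Finset.univ : Finset (Fin n × Fin n)).filter fun p => p.1 < p.2).image
      (fun p => (Pi.single p.1 1 : Fin n → ℚ) - Pi.single p.2 1) ∪
    ((Finset.univ : Finset (Fin n × Fin n)).filter fun p => p.1 < p.2).image
      (fun p => (Pi.single p.1 1 : Fin n → ℚ) + Pi.single p.2 1) ∪
    (Finset.univ : Finset (Fin n)).image
      (fun s => (2 : ℚ) • (Pi.single s 1 : Fin n → ℚ))

/-- Half the sum of the positive roots of type `C_n` lying in a given set `S`;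
`ρ = rhoSubC n Set.univ` and `ρ_J = rhoSubC n (span of the α_j, j ∈ J)`. -/
noncomputable def rhoSubC (n : ℕ) (S : Set (Fin n → ℚ)) : Fin n → ℚ :=
  (1 / 2 : ℚ) • ∑ α ∈ posFinsetC n, Set.indicator S id α

namespace C9
variable {n : ℕ}

def e (a : Fin n) : Fin n → ℚ := Pi.single a 1

lemma e_apply (a b : Fin n) : e a b = if b = a then 1 else 0 := Pi.single_apply a 1 b

lemma dotV_e (x : Fin n → ℚ) (a : Fin n) : dotV x (e a) = x a := by
  simp [dotV, e_apply, mul_ite]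

lemma dotV_sub_right (x y z : Fin n → ℚ) : dotV x (y - z) = dotV x y - dotV x z := by
  simp [dotV, mul_sub, Finset.sum_sub_distrib]

lemma dotV_add_right (x y z : Fin n → ℚ) : dotV x (y + z) = dotV x y + dotV x z := by
  simp [dotV, mul_add, Finset.sum_add_distrib]

lemma dotV_smul_right (r : ℚ) (x y : Fin n → ℚ) : dotV x (r • y) = r * dotV x y := by
  simp only [dotV, Pi.smul_apply, smul_eq_mul, Finset.mul_sum]
  exact Finset.sum_congr rfl fun j _ => by ring

lemma dotV_sum_right {ι : Type*} (s : Finset ι) (x : Fin n → ℚ) (f : ι → Fin n → ℚ) :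
    dotV x (∑ j ∈ s, f j) = ∑ j ∈ s, dotV x (f j) := by
  simp only [dotV, Finset.sum_apply, Finset.mul_sum]
  rw [Finset.sum_comm]

lemma sub_ne_add {a b c d : Fin n} (hab : a < b) (hcd : c < d) :
    e a - e b ≠ e c + e d := by
  intro h
  have h1 := congrFun h b
  have hba : b ≠ a := (ne_of_lt hab).symm
  simp only [Pi.sub_apply, Pi.add_apply, e_apply, if_pos rfl, if_neg hba] at h1
  split_ifs at h1 <;> norm_num at h1

lemma sub_ne_two {a b s : Fin n} (hab : a < b) :
    e a - e b ≠ (2:ℚ) • e s := by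
  intro h
  have h1 := congrFun h s
  simp only [Pi.sub_apply, Pi.smul_apply, e_apply, if_pos rfl, smul_eq_mul] at h1
  split_ifs at h1 <;> norm_num at h1

lemma add_ne_two {a b s : Fin n} (hab : a < b) :
    e a + e b ≠ (2:ℚ) • e s := by
  intro h
  have h1 := congrFun h a
  have h2 := congrFun h b
  have hne : a ≠ b := ne_of_lt hab
  simp only [Pi.add_apply, Pi.smul_apply, e_apply, if_pos rfl, if_neg hne,
    if_neg (Ne.symm hne), smul_eq_mul] at h1 h2
  split_ifs at h1 h2 <;> norm_num at h1

lemma inj_sub {a b c d : Fin n} (hab : a < b) (hcd : c < d)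
    (h : e a - e b = e c - e d) : a = c ∧ b = d := by
  have hne : a ≠ b := ne_of_lt hab
  have hne2 : c ≠ d := ne_of_lt hcd
  have h1 := congrFun h a
  simp only [Pi.sub_apply, e_apply, if_pos rfl, if_neg hne] at h1
  have hac : a = c := by
    split_ifs at h1 with h' h'' <;> first | assumption | norm_num at h1
  subst hac
  refine ⟨rfl, ?_⟩
  have h2 := congrFun h b
  simp only [Pi.sub_apply, e_apply, if_pos rfl, if_neg (Ne.symm hne)] at h2
  split_ifs at h2 with h' <;> first | assumption | norm_num at h2

lemma inj_add {a b c d : Fin n} (hab : a < b) (hcd : c < d)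
    (h : e a + e b = e c + e d) : a = c ∧ b = d := by
  have hne : a ≠ b := ne_of_lt hab
  have hne2 : c ≠ d := ne_of_lt hcd
  have h1 := congrFun h a
  simp only [Pi.add_apply, e_apply, if_pos rfl, if_neg hne] at h1
  have hac : a = c := by
    rcases eq_or_ne a c with h' | h'
    · exact h'
    rw [if_neg h'] at h1
    have had : a = d := by
      by_contra h''
      rw [if_neg h''] at h1; norm_num at h1
    subst had
    have h3 := congrFun h c
    have hca : c ≠ a := ne_of_lt hcd
    have hcb : c ≠ b := ne_of_lt (lt_trans hcd hab)
    simp only [Pi.add_apply, e_apply, if_pos rfl, if_neg hca, if_neg hcb] at h3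
    norm_num at h3
  subst hac
  refine ⟨rfl, ?_⟩
  have h2 := congrFun h b
  simp only [Pi.add_apply, e_apply, if_pos rfl, if_neg (Ne.symm hne)] at h2
  split_ifs at h2 with h' <;> first | assumption | norm_num at h2

lemma inj_two {a b : Fin n} (h : (2:ℚ) • e a = (2:ℚ) • e b) : a = b := by
  have h1 := congrFun h a
  simp only [Pi.smul_apply, e_apply, if_pos rfl, smul_eq_mul] at h1
  split_ifs at h1 with h' <;> first | assumption | norm_num at h1

def P (n : ℕ) : Finset (Fin n × Fin n) := Finset.univ.filter fun p => p.1 < p.2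

lemma sum_posFinsetC (g : (Fin n → ℚ) → ℚ) :
    ∑ α ∈ posFinsetC n, g α =
      (∑ p ∈ P n, g (e p.1 - e p.2)) + (∑ p ∈ P n, g (e p.1 + e p.2))
        + ∑ s : Fin n, g ((2:ℚ) • e s) := by
  classical
  have hdisj1 : Disjoint ((P n).image fun p => e p.1 - e p.2)
      ((P n).image fun p => e p.1 + e p.2) := by
    rw [Finset.disjoint_left]
    rintro x hx hx2
    rcases Finset.mem_image.1 hx with ⟨p, hp, rfl⟩
    rcases Finset.mem_image.1 hx2 with ⟨q, hq, hqe⟩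
    have hp' := (Finset.mem_filter.1 hp).2
    have hq' := (Finset.mem_filter.1 hq).2
    exact sub_ne_add hp' hq' hqe.symm
  have hdisj2 : Disjoint
      (((P n).image fun p => e p.1 - e p.2) ∪ ((P n).image fun p => e p.1 + e p.2))
      (Finset.univ.image fun s : Fin n => (2:ℚ) • e s) := by
    rw [Finset.disjoint_left]
    rintro x hx hx2
    rcases Finset.mem_image.1 hx2 with ⟨s, _, rfl⟩
    rcases Finset.mem_union.1 hx with hx1 | hx1 <;>
      rcases Finset.mem_image.1 hx1 with ⟨p, hp, hpe⟩
    · exact sub_ne_two (Finset.mem_filter.1 hp).2 hpe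
    · exact add_ne_two (Finset.mem_filter.1 hp).2 hpe
  have h1 : posFinsetC n =
      (((P n).image fun p => e p.1 - e p.2) ∪ ((P n).image fun p => e p.1 + e p.2))
        ∪ (Finset.univ.image fun s : Fin n => (2:ℚ) • e s) := rfl
  have hi1 : ∀ p ∈ P n, ∀ q ∈ P n, e p.1 - e p.2 = e q.1 - e q.2 → p = q := by
    intro p hp q hq hpq
    obtain ⟨h1, h2⟩ := inj_sub (Finset.mem_filter.1 hp).2 (Finset.mem_filter.1 hq).2 hpq
    exact Prod.ext h1 h2
  have hi2 : ∀ p ∈ P n, ∀ q ∈ P n, e p.1 + e p.2 = e q.1 + e q.2 → p = q := by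
    intro p hp q hq hpq
    obtain ⟨h1, h2⟩ := inj_add (Finset.mem_filter.1 hp).2 (Finset.mem_filter.1 hq).2 hpq
    exact Prod.ext h1 h2
  have hi3 : ∀ s ∈ (Finset.univ : Finset (Fin n)), ∀ t ∈ (Finset.univ : Finset (Fin n)),
      (2:ℚ) • e s = (2:ℚ) • e t → s = t := fun s _ t _ hst => inj_two hst
  rw [h1, Finset.sum_union hdisj2, Finset.sum_union hdisj1,
    Finset.sum_image hi1, Finset.sum_image hi2, Finset.sum_image hi3]

noncomputable def fI (n i : ℕ) : (Fin n → ℚ) →ₗ[ℚ] ℚ :=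
  ∑ k ∈ Finset.univ.filter fun k : Fin n => (k : ℕ) < i, LinearMap.proj k

lemma fI_apply (i : ℕ) (x : Fin n → ℚ) :
    fI n i x = ∑ k ∈ Finset.univ.filter fun k : Fin n => (k : ℕ) < i, x k := by
  simp [fI]

lemma fI_e (i : ℕ) (a : Fin n) : fI n i (e a) = if (a:ℕ) < i then 1 else 0 := by
  rw [fI_apply]
  simp only [e_apply]
  rw [Finset.sum_ite_eq']
  simp

def Sp (n i : ℕ) : Submodule ℚ (Fin n → ℚ) :=
  Submodule.span ℚ (alC n '' {j | 1 ≤ j ∧ j ≤ n ∧ j ≠ i})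

lemma alC_mem {i j : ℕ} (h1 : 1 ≤ j) (h2 : j ≤ n) (h3 : j ≠ i) : alC n j ∈ Sp n i :=
  Submodule.subset_span ⟨j, ⟨h1, h2, h3⟩, rfl⟩

lemma alC_lt (j : ℕ) (h1 : 1 ≤ j) (h2 : j < n) :
    alC n j = e (⟨j - 1, by omega⟩ : Fin n) - e (⟨j, h2⟩ : Fin n) := by
  rw [alC, dif_pos ⟨h1, h2⟩]; rfl

lemma alC_top (h : 1 ≤ n) : alC n n = (2:ℚ) • e (⟨n - 1, by omega⟩ : Fin n) := by
  rw [alC, dif_neg (by omega : ¬(1 ≤ n ∧ n < n)), dif_pos ⟨rfl, h⟩]; rfl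

lemma mem_tele (i : ℕ) : ∀ (d : ℕ) (a : Fin n) (h : (a:ℕ) + d < n),
    (∀ k, (a:ℕ) < k → k ≤ (a:ℕ) + d → k ≠ i) →
      e a - e (⟨(a:ℕ) + d, h⟩ : Fin n) ∈ Sp n i := by
  intro d
  induction d with
  | zero =>
    intro a h _
    have ha : (⟨(a:ℕ) + 0, h⟩ : Fin n) = a := by ext; simp
    rw [ha, sub_self]; exact zero_mem _
  | succ d ih =>
    intro a h hcond
    have h' : (a:ℕ) + d < n := by omega
    have hj : alC n ((a:ℕ) + d + 1) =
        e (⟨(a:ℕ) + d, h'⟩ : Fin n) - e (⟨(a:ℕ) + d + 1, by omega⟩ : Fin n) := by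
      rw [alC_lt ((a:ℕ) + d + 1) (by omega) (by omega)]
      rfl
    have hmem : alC n ((a:ℕ) + d + 1) ∈ Sp n i :=
      alC_mem (by omega) (by omega) (hcond ((a:ℕ) + d + 1) (by omega) (by omega))
    have hib := ih a h' (fun k hk1 hk2 => hcond k hk1 (by omega))
    have := add_mem hib hmem
    rw [hj] at this
    have heq : e a - e (⟨(a:ℕ) + d, h'⟩ : Fin n) +
        (e (⟨(a:ℕ) + d, h'⟩ : Fin n) - e (⟨(a:ℕ) + d + 1, by omega⟩ : Fin n)) =
        e a - e (⟨(a:ℕ) + d + 1, by omega⟩ : Fin n) := by abel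
    rwa [heq] at this

lemma mem_sub {i : ℕ} (a b : Fin n) (hab : (a:ℕ) ≤ (b:ℕ))
    (hcond : ∀ k, (a:ℕ) < k → k ≤ (b:ℕ) → k ≠ i) : e a - e b ∈ Sp n i := by
  have hb : b = ⟨(a:ℕ) + ((b:ℕ) - (a:ℕ)), by omega⟩ := by ext; simp; omega
  rw [hb]
  exact mem_tele i ((b:ℕ) - (a:ℕ)) a (by omega)
    (fun k hk1 hk2 => hcond k hk1 (by omega))

lemma mem_two {i : ℕ} (t : Fin n) (ht : i ≤ (t:ℕ)) : (2:ℚ) • e t ∈ Sp n i := by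
  have hn1 : (t:ℕ) < n := t.isLt
  have h1 : e t - e (⟨n - 1, by omega⟩ : Fin n) ∈ Sp n i :=
    mem_sub t _ (by simp; omega) (fun k hk1 _ => by omega)
  have h2 : alC n n ∈ Sp n i := alC_mem (by omega) le_rfl (by omega)
  rw [alC_top (by omega)] at h2
  have := add_mem (Submodule.smul_mem _ (2:ℚ) h1) h2
  rwa [smul_sub, sub_add_cancel] at this

lemma mem_add {i : ℕ} (a b : Fin n) (hab : a < b) (hia : i ≤ (a:ℕ)) :
    e a + e b ∈ Sp n i := by
  have h1 : e a - e b ∈ Sp n i :=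
    mem_sub a b (le_of_lt hab) (fun k hk1 _ => by omega)
  have h2 : (2:ℚ) • e b ∈ Sp n i := by
    refine mem_two b ?_
    have hb := hab
    rw [Fin.lt_def] at hb
    omega
  have h3 := add_mem h1 h2
  rw [two_smul] at h3
  have heq : e a - e b + (e b + e b) = e a + e b := by abel
  rwa [heq] at h3

lemma fI_alC {i j : ℕ} (hi : i ≤ n) (h1 : 1 ≤ j) (h2 : j ≤ n) (h3 : j ≠ i) :
    fI n i (alC n j) = 0 := by
  rcases lt_or_eq_of_le h2 with hlt | heq
  · rw [alC_lt j h1 hlt, map_sub, fI_e, fI_e]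
    simp only []
    split_ifs <;> first | (exfalso; omega) | norm_num
  · subst heq
    rw [alC_top (by omega), map_smul, fI_e]
    simp only [smul_eq_mul]
    rw [if_neg (by omega)]
    ring

lemma not_mem_of_fI {i : ℕ} (hi : i ≤ n) {x : Fin n → ℚ} (hx : fI n i x ≠ 0) :
    x ∉ Sp n i := by
  intro hmem
  apply hx
  have hle : Sp n i ≤ LinearMap.ker (fI n i) := by
    rw [Sp, Submodule.span_le]
    rintro y ⟨j, ⟨hj1, hj2, hj3⟩, rfl⟩
    exact fI_alC hi hj1 hj2 hj3
  exact hle hmem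

lemma dotV_zero_right (x : Fin n → ℚ) : dotV x 0 = 0 := by simp [dotV]

lemma dotV_comm (x y : Fin n → ℚ) : dotV x y = dotV y x := by
  simp [dotV, mul_comm]

lemma dotV_sub_left (x y z : Fin n → ℚ) : dotV (x - y) z = dotV x z - dotV y z := by
  rw [dotV_comm, dotV_sub_right, dotV_comm z x, dotV_comm z y]

lemma dotV_smul_left (r : ℚ) (x y : Fin n → ℚ) : dotV (r • x) y = r * dotV x y := by
  rw [dotV_comm, dotV_smul_right, dotV_comm]

lemma dotV_e_e (a b : Fin n) : dotV (e a) (e b) = if b = a then 1 else 0 := by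
  rw [dotV_e, e_apply]

lemma sum_range_lt (i m : ℕ) :
    ∑ j ∈ Finset.range m, (if j < i then (1:ℚ) else 0) = (min i m : ℕ) := by
  induction m with
  | zero => simp
  | succ m ih =>
    rw [Finset.sum_range_succ, ih]
    split_ifs with h
    · have e1 : min i m = m := by omega
      have e2 : min i (m+1) = m+1 := by omega
      rw [e1, e2]; push_cast; ring
    · have e1 : min i m = min i (m+1) := by omega
      rw [e1, add_zero]

lemma count_lt (i : ℕ) (h : i ≤ n) :
    ∑ b : Fin n, (if (b:ℕ) < i then (1:ℚ) else 0) = (i:ℚ) := by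
  rw [Fin.sum_univ_eq_sum_range (fun j => if j < i then (1:ℚ) else 0) n, sum_range_lt]
  rw [min_eq_left h]

lemma count_ge (i : ℕ) (h : i ≤ n) :
    ∑ b : Fin n, (if i ≤ (b:ℕ) then (1:ℚ) else 0) = (n:ℚ) - (i:ℚ) := by
  have hpt : ∀ b : Fin n, (if i ≤ (b:ℕ) then (1:ℚ) else 0)
      = 1 - (if (b:ℕ) < i then (1:ℚ) else 0) := by
    intro b
    split_ifs with h1 h2 h3 <;> first | (exfalso; omega) | norm_num
  simp only [hpt]
  rw [Finset.sum_sub_distrib, count_lt i h]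
  simp

lemma coroot_lt {i : ℕ} (h1 : 1 ≤ i) (h2 : i < n) :
    corootV (alC n i) = e (⟨i - 1, by omega⟩ : Fin n) - e (⟨i, h2⟩ : Fin n) := by
  rw [corootV, alC_lt i h1 h2]
  have hAB : (⟨i, h2⟩ : Fin n) ≠ (⟨i - 1, by omega⟩ : Fin n) := by
    simp only [ne_eq, Fin.mk.injEq]; omega
  rw [dotV_sub_left, dotV_sub_right, dotV_sub_right, dotV_e_e, dotV_e_e, dotV_e_e, dotV_e_e]
  rw [if_pos rfl, if_pos rfl, if_neg hAB, if_neg (fun h => hAB h.symm)]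
  norm_num

lemma coroot_top (h : 1 ≤ n) :
    corootV (alC n n) = e (⟨n - 1, by omega⟩ : Fin n) := by
  rw [corootV, alC_top h, dotV_smul_left, dotV_smul_right, dotV_e_e, if_pos rfl]
  norm_num
  rw [smul_smul]
  norm_num

lemma sum_P (h : Fin n × Fin n → ℚ) :
    ∑ p ∈ P n, h p = ∑ a : Fin n, ∑ b : Fin n, if a < b then h (a, b) else 0 := by
  rw [P, Finset.sum_filter, Fintype.sum_prod_type]

lemma sum_ite_fin (A : Fin n) (w : Fin n → ℚ) :
    ∑ a : Fin n, (if a = A then w a else 0) = w A := by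
  rw [Finset.sum_ite_eq']; simp

lemma coroot_eq_lt {i : ℕ} (hi1 : 1 ≤ i) (hin : i < n) {A B : Fin n}
    (hA : (A:ℕ) = i - 1) (hB : (B:ℕ) = i) :
    corootV (alC n i) = e A - e B := by
  rw [coroot_lt hi1 hin]
  congr 1
  · apply congrArg; apply Fin.ext; simp [hA]
  · apply congrArg; apply Fin.ext; simp [hB]

lemma g_sub_lt {i : ℕ} (hi1 : 1 ≤ i) (hin : i < n) {A B : Fin n}
    (hA : (A:ℕ) = i - 1) (hB : (B:ℕ) = i) (a b : Fin n) (hab : a < b) :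
    dotV (corootV (alC n i)) (e a - e b - Set.indicator (Sp n i) id (e a - e b)) =
      (if a = A ∧ i ≤ (b:ℕ) then 1 else 0) + (if b = B then 1 else 0) := by
  have hab' : (a:ℕ) < (b:ℕ) := hab
  rw [coroot_eq_lt hi1 hin hA hB]
  by_cases hf : (a:ℕ) < i ∧ i ≤ (b:ℕ)
  · have hnotmem : e a - e b ∉ Sp n i := by
      apply not_mem_of_fI (le_of_lt hin)
      rw [map_sub, fI_e, fI_e, if_pos hf.1, if_neg (by omega)]
      norm_num
    rw [Set.indicator_of_notMem hnotmem, sub_zero]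
    rw [dotV_sub_left, dotV_sub_right, dotV_sub_right, dotV_e_e, dotV_e_e, dotV_e_e, dotV_e_e]
    have haB : a ≠ B := by
      intro h; rw [h] at hf; omega
    have hbA : b ≠ A := by
      intro h; rw [h] at hf; omega
    rw [if_neg haB, if_neg hbA]
    simp only [hf.2, and_true]
    ring
  · push_neg at hf
    have hmem : e a - e b ∈ Sp n i := by
      rcases le_or_gt i (a:ℕ) with ha | ha
      · exact mem_sub a b (le_of_lt hab') (fun k hk1 hk2 => by omega)
      · exact mem_sub a b (le_of_lt hab') (fun k hk1 hk2 => by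
          have := hf ha; omega)
    rw [Set.indicator_of_mem hmem, id_eq, sub_self, dotV_zero_right]
    rw [if_neg, if_neg]
    · norm_num
    · intro h
      have hb' : (b:ℕ) = i := by rw [h, hB]
      have : (a:ℕ) < i := by omega
      have := hf this
      omega
    · rintro ⟨h1, h2⟩
      have ha' : (a:ℕ) = i - 1 := by rw [h1, hA]
      have : (a:ℕ) < i := by omega
      have := hf this
      omega

lemma g_add_lt {i : ℕ} (hi1 : 1 ≤ i) (hin : i < n) {A B : Fin n}
    (hA : (A:ℕ) = i - 1) (hB : (B:ℕ) = i) (a b : Fin n) (hab : a < b) :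
    dotV (corootV (alC n i)) (e a + e b - Set.indicator (Sp n i) id (e a + e b)) =
      (if a = A then 1 else 0) + (if b = A then 1 else 0) - (if b = B then 1 else 0) := by
  have hab' : (a:ℕ) < (b:ℕ) := hab
  rw [coroot_eq_lt hi1 hin hA hB]
  by_cases hf : (a:ℕ) < i
  · have hnotmem : e a + e b ∉ Sp n i := by
      apply not_mem_of_fI (le_of_lt hin)
      rw [map_add, fI_e, fI_e, if_pos hf]
      split_ifs <;> norm_num
    rw [Set.indicator_of_notMem hnotmem, sub_zero]
    rw [dotV_sub_left, dotV_add_right, dotV_add_right, dotV_e_e, dotV_e_e, dotV_e_e, dotV_e_e]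
    have haB : a ≠ B := by
      intro h; rw [h] at hf; omega
    rw [if_neg haB]
    ring
  · push_neg at hf
    have hmem : e a + e b ∈ Sp n i := mem_add a b hab hf
    rw [Set.indicator_of_mem hmem, id_eq, sub_self, dotV_zero_right]
    rw [if_neg, if_neg, if_neg]
    · norm_num
    · intro h
      have : (b:ℕ) = i := by rw [h, hB]
      omega
    · intro h
      have : (b:ℕ) = i - 1 := by rw [h, hA]
      omega
    · intro h
      have : (a:ℕ) = i - 1 := by rw [h, hA]
      omega

lemma g_two_lt {i : ℕ} (hi1 : 1 ≤ i) (hin : i < n) {A B : Fin n}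
    (hA : (A:ℕ) = i - 1) (hB : (B:ℕ) = i) (s : Fin n) :
    dotV (corootV (alC n i)) ((2:ℚ) • e s - Set.indicator (Sp n i) id ((2:ℚ) • e s)) =
      (if s = A then 2 else 0) := by
  rw [coroot_eq_lt hi1 hin hA hB]
  by_cases hf : (s:ℕ) < i
  · have hnotmem : (2:ℚ) • e s ∉ Sp n i := by
      apply not_mem_of_fI (le_of_lt hin)
      rw [map_smul, fI_e, if_pos hf]
      norm_num
    rw [Set.indicator_of_notMem hnotmem, sub_zero]
    rw [dotV_sub_left, dotV_smul_right, dotV_smul_right, dotV_e_e, dotV_e_e]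
    have hsB : s ≠ B := by
      intro h; rw [h] at hf; omega
    rw [if_neg hsB]
    split_ifs <;> ring
  · push_neg at hf
    have hmem : (2:ℚ) • e s ∈ Sp n i := mem_two s hf
    rw [Set.indicator_of_mem hmem, id_eq, sub_self, dotV_zero_right]
    rw [if_neg]
    intro h
    have : (s:ℕ) = i - 1 := by rw [h, hA]
    omega

lemma sum_ite_const (A : Fin n) (w : Fin n → ℚ) (v : ℚ) (hw : ∑ b : Fin n, w b = v) :
    ∑ a : Fin n, ∑ b : Fin n, (if a = A then w b else 0) = v := by
  have h : ∀ a : Fin n, (∑ b : Fin n, if a = A then w b else 0) = if a = A then v else 0 := by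
    intro a
    by_cases h : a = A
    · simp only [if_pos h]; exact hw
    · simp only [if_neg h, Finset.sum_const_zero]
  simp only [h]
  rw [sum_ite_fin A (fun _ => v)]

lemma sum_ite_const' (B : Fin n) (w : Fin n → ℚ) (v : ℚ) (hw : ∑ a : Fin n, w a = v) :
    ∑ a : Fin n, ∑ b : Fin n, (if b = B then w a else 0) = v := by
  have h : ∀ a : Fin n, (∑ b : Fin n, if b = B then w a else 0) = w a := by
    intro a; rw [Finset.sum_ite_eq']; simp
  simp only [h]; exact hw

lemma sum1a {i : ℕ} (hi1 : 1 ≤ i) (hin : i < n) {A : Fin n} (hA : (A:ℕ) = i - 1) :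
    ∑ p ∈ P n, (if p.1 = A ∧ i ≤ (p.2:ℕ) then (1:ℚ) else 0) = (n:ℚ) - i := by
  rw [sum_P]
  have claim : ∀ a b : Fin n, (if a < b then (if a = A ∧ i ≤ (b:ℕ) then (1:ℚ) else 0) else 0)
      = if a = A then (if i ≤ (b:ℕ) then 1 else 0) else 0 := by
    intro a b
    split_ifs <;> first | rfl | (exfalso; simp only [Fin.lt_def, Fin.ext_iff] at *; omega)
  simp only [claim]
  exact sum_ite_const A _ _ (count_ge i (le_of_lt hin))

-- ∑ over P of [p.1 = A] where A.val = i - 1 (with 1 ≤ i ≤ n): equals n - i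
lemma sumA1 {i : ℕ} (hi1 : 1 ≤ i) (hin : i < n) {A : Fin n} (hA : (A:ℕ) = i - 1) :
    ∑ p ∈ P n, (if p.1 = A then (1:ℚ) else 0) = (n:ℚ) - i := by
  rw [sum_P]
  have claim : ∀ a b : Fin n, (if a < b then (if a = A then (1:ℚ) else 0) else 0)
      = if a = A then (if i ≤ (b:ℕ) then 1 else 0) else 0 := by
    intro a b
    split_ifs <;> first | rfl | (exfalso; simp only [Fin.lt_def, Fin.ext_iff] at *; omega)
  simp only [claim]
  exact sum_ite_const A _ _ (count_ge i (le_of_lt hin))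

-- ∑ over P of [p.2 = B] where B.val = m : equals count of a < m, i.e. m
lemma sumB2 {m : ℕ} {B : Fin n} (hB : (B:ℕ) = m) :
    ∑ p ∈ P n, (if p.2 = B then (1:ℚ) else 0) = (m:ℚ) := by
  rw [sum_P]
  have claim : ∀ a b : Fin n, (if a < b then (if b = B then (1:ℚ) else 0) else 0)
      = if b = B then (if (a:ℕ) < m then 1 else 0) else 0 := by
    intro a b
    split_ifs <;> first | rfl | (exfalso; simp only [Fin.lt_def, Fin.ext_iff] at *; omega)
  simp only [claim]
  exact sum_ite_const' B _ _ (count_lt m (by omega))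

lemma key_lt {i : ℕ} (hi1 : 1 ≤ i) (hin : i < n) :
    ∑ α ∈ posFinsetC n, dotV (corootV (alC n i)) (α - Set.indicator (Sp n i) id α)
      = 2 * (n:ℚ) - i + 1 := by
  obtain ⟨A, hA⟩ : ∃ A : Fin n, (A:ℕ) = i - 1 := ⟨⟨i - 1, by omega⟩, rfl⟩
  obtain ⟨B, hB⟩ : ∃ B : Fin n, (B:ℕ) = i := ⟨⟨i, hin⟩, rfl⟩
  rw [sum_posFinsetC]
  have h1 : ∑ p ∈ P n, dotV (corootV (alC n i))
        (e p.1 - e p.2 - Set.indicator (Sp n i) id (e p.1 - e p.2))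
      = ∑ p ∈ P n, ((if p.1 = A ∧ i ≤ (p.2:ℕ) then (1:ℚ) else 0) + (if p.2 = B then 1 else 0)) :=
    Finset.sum_congr rfl fun p hp =>
      g_sub_lt hi1 hin hA hB p.1 p.2 (Finset.mem_filter.1 hp).2
  have h2 : ∑ p ∈ P n, dotV (corootV (alC n i))
        (e p.1 + e p.2 - Set.indicator (Sp n i) id (e p.1 + e p.2))
      = ∑ p ∈ P n, ((if p.1 = A then (1:ℚ) else 0) + (if p.2 = A then 1 else 0)
          - (if p.2 = B then 1 else 0)) :=
    Finset.sum_congr rfl fun p hp =>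
      g_add_lt hi1 hin hA hB p.1 p.2 (Finset.mem_filter.1 hp).2
  have h3 : ∑ s : Fin n, dotV (corootV (alC n i))
        ((2:ℚ) • e s - Set.indicator (Sp n i) id ((2:ℚ) • e s))
      = ∑ s : Fin n, (if s = A then (2:ℚ) else 0) :=
    Finset.sum_congr rfl fun s _ => g_two_lt hi1 hin hA hB s
  rw [h1, h2, h3]
  rw [Finset.sum_add_distrib, sum1a hi1 hin hA, sumB2 hB]
  rw [Finset.sum_sub_distrib, Finset.sum_add_distrib, sumA1 hi1 hin hA, sumB2 hA, sumB2 hB]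
  rw [sum_ite_fin A (fun _ => (2:ℚ))]
  rw [Nat.cast_sub hi1]
  push_cast
  ring

lemma key_top (hn : 2 ≤ n) :
    ∑ α ∈ posFinsetC n, dotV (corootV (alC n n)) (α - Set.indicator (Sp n n) id α)
      = (n:ℚ) + 1 := by
  obtain ⟨L, hL⟩ : ∃ L : Fin n, (L:ℕ) = n - 1 := ⟨⟨n - 1, by omega⟩, rfl⟩
  have hcor : corootV (alC n n) = e L := by
    rw [coroot_top (by omega)]
    apply congrArg; apply Fin.ext; simp [hL]
  rw [sum_posFinsetC]
  have h1 : ∑ p ∈ P n, dotV (corootV (alC n n))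
        (e p.1 - e p.2 - Set.indicator (Sp n n) id (e p.1 - e p.2))
      = ∑ p ∈ P n, (0:ℚ) := by
    refine Finset.sum_congr rfl fun p hp => ?_
    have hab : p.1 < p.2 := (Finset.mem_filter.1 hp).2
    have hab' : (p.1:ℕ) < (p.2:ℕ) := hab
    have hmem : e p.1 - e p.2 ∈ Sp n n :=
      mem_sub p.1 p.2 (le_of_lt hab') (fun k hk1 hk2 => by omega)
    rw [Set.indicator_of_mem hmem, id_eq, sub_self, dotV_zero_right]
  have h2 : ∑ p ∈ P n, dotV (corootV (alC n n))
        (e p.1 + e p.2 - Set.indicator (Sp n n) id (e p.1 + e p.2))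
      = ∑ p ∈ P n, (if p.2 = L then (1:ℚ) else 0) := by
    refine Finset.sum_congr rfl fun p hp => ?_
    have hab : p.1 < p.2 := (Finset.mem_filter.1 hp).2
    have hab' : (p.1:ℕ) < (p.2:ℕ) := hab
    have hnm : e p.1 + e p.2 ∉ Sp n n := by
      apply not_mem_of_fI le_rfl
      rw [map_add, fI_e, fI_e, if_pos p.1.isLt, if_pos p.2.isLt]
      norm_num
    rw [Set.indicator_of_notMem hnm, sub_zero, hcor, dotV_add_right, dotV_e_e, dotV_e_e]
    have hne : p.1 ≠ L := by
      intro h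
      have := congrArg Fin.val h
      rw [hL] at this
      omega
    rw [if_neg hne, zero_add]
  have h3 : ∑ s : Fin n, dotV (corootV (alC n n))
        ((2:ℚ) • e s - Set.indicator (Sp n n) id ((2:ℚ) • e s))
      = ∑ s : Fin n, (if s = L then (2:ℚ) else 0) := by
    refine Finset.sum_congr rfl fun s _ => ?_
    have hnm : (2:ℚ) • e s ∉ Sp n n := by
      apply not_mem_of_fI le_rfl
      rw [map_smul, fI_e, if_pos s.isLt]
      norm_num
    rw [Set.indicator_of_notMem hnm, sub_zero, hcor, dotV_smul_right, dotV_e_e]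
    split_ifs <;> ring
  rw [h1, h2, h3]
  rw [Finset.sum_const_zero, sumB2 hL, sum_ite_fin L (fun _ => (2:ℚ))]
  rw [Nat.cast_sub (by omega : 1 ≤ n)]
  push_cast
  ring

end C9

/-- In type `C_n`, for `i ∈ [n]`,
`2⟨α_i^∨, ρ − ρ_{I∖{i}}⟩ = 2n − i + 1`. -/
theorem typeC_rho_pairing (n i : ℕ) (hn : 2 ≤ n) (hi1 : 1 ≤ i) (hi2 : i ≤ n) :
    2 * dotV (corootV (alC n i))
        (rhoSubC n Set.univ -
          rhoSubC n
            (Submodule.span ℚ (alC n '' {j | 1 ≤ j ∧ j ≤ n ∧ j ≠ i}) :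
              Submodule ℚ (Fin n → ℚ))) =
      2 * (n : ℚ) - (i : ℚ) + 1 := by
  have hSp : Submodule.span ℚ (alC n '' {j | 1 ≤ j ∧ j ≤ n ∧ j ≠ i}) = C9.Sp n i := rfl
  rw [hSp]
  have hρ : rhoSubC n Set.univ - rhoSubC n (C9.Sp n i : Set (Fin n → ℚ))
      = (1/2 : ℚ) • ∑ α ∈ posFinsetC n, (α - Set.indicator (C9.Sp n i) id α) := by
    rw [rhoSubC, rhoSubC, ← smul_sub, ← Finset.sum_sub_distrib]
    simp only [Set.indicator_univ, id_eq]
  rw [hρ, C9.dotV_smul_right, C9.dotV_sum_right]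
  by_cases hin : i < n
  · rw [C9.key_lt hi1 hin]
    ring
  · have hie : i = n := by omega
    subst hie
    rw [C9.key_top hn]
    ring
end

section
/- Let W be the Weyl group of type D_n realized as {w ∈ Perm(D_n) : w(σ(s)) = σ(w(s)) for s ∈ [n] and #{s ∈ [n] : w(s) ⪰ n̄} is even}, where D_n is the partially ordered set 1 ≺ ⋯ ≺ n−1 ≺ {n, n̄} ≺ n−1‾ ≺ ⋯ ≺ 1̄ (n and n̄ incomparable). Then the length of w equals Σ_{s=1}^n (a_s(w) + b_s(w)), where a_s(w) = #{t ∈ [s+1,n] : w(s) ≻ w(t)} and b_s(w) = #{t ∈ [s+1,n] : w(s) ≻ σ(w(t))}. -/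
open Equiv

/-- The partially ordered set `D_n = {1 ≺ ⋯ ≺ n−1 ≺ {n, n̄} ≺ (n−1)‾ ≺ ⋯ ≺ 1̄}`
(with `n` and `n̄` incomparable) is modelled on `Fin (2n)` (index `j < n` is the
letter `j+1`; index `j ≥ n` is the letter `(2n−j)‾`; so `n` has index `n−1` and
`n̄` has index `n`).  `sigmaD` is the bar involution `σ : s ↔ s̄`. -/
def sigmaD (n : ℕ) : Equiv.Perm (Fin (2 * n)) :=
  Function.Involutive.toPerm
    (fun j => ⟨2 * n - 1 - j.val, by have := j.isLt; omega⟩)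
    (fun j => by
      have hj := j.isLt
      apply Fin.ext
      show 2 * n - 1 - (2 * n - 1 - j.val) = j.val
      omega)

/-- The strict partial order on `D_n` (in terms of 0-based indices): the index order,
except that `n` (index `n−1`) and `n̄` (index `n`) are incomparable. -/
def ltD (n : ℕ) (a b : ℕ) : Prop :=
  a < b ∧ ¬(a = n - 1 ∧ b = n)

instance (n a b : ℕ) : Decidable (ltD n a b) := by unfold ltD; infer_instance

/-- `valP w u`: the (0-based) index in `D_n` of the entry of `w` at (0-based)
position `u`. -/
def valP {m : ℕ} (w : Equiv.Perm (Fin m)) (u : ℕ) : ℕ :=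
  if h : u < m then (w ⟨u, h⟩).val else 0

/-- The simple reflections of the Weyl group of type `D_n`:
`r_s = (s, s+1)(s̄, (s+1)‾)` for `s ∈ [n−1]` and `r_n = (n−1, n̄)((n−1)‾, n)`. -/
def genD (n : ℕ) : Set (Equiv.Perm (Fin (2 * n))) :=
  {g | ∃ s : ℕ, ∃ (_h1 : 1 ≤ s) (_h2 : s < n),
      g = Equiv.swap ⟨s - 1, by omega⟩ ⟨s, by omega⟩ *
          Equiv.swap (sigmaD n ⟨s - 1, by omega⟩) (sigmaD n ⟨s, by omega⟩)} ∪
  {g | ∃ _h : 2 ≤ n,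
      g = Equiv.swap ⟨n - 2, by omega⟩ ⟨n, by omega⟩ *
          Equiv.swap (sigmaD n ⟨n - 2, by omega⟩) (sigmaD n ⟨n, by omega⟩)}

/-- Coxeter length: word length with respect to the simple reflections of type `D_n`. -/
noncomputable def lenD (n : ℕ) (w : Equiv.Perm (Fin (2 * n))) : ℕ :=
  sInf {k | ∃ l : List (Equiv.Perm (Fin (2 * n))),
    l.length = k ∧ (∀ x ∈ l, x ∈ genD n) ∧ l.prod = w}

/-- `a_s(w) = #{t ∈ [s+1,n] : w(s) ≻ w(t)}` in the partial order of `D_n`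
(0-based `s`). -/
def aD (n : ℕ) (w : Equiv.Perm (Fin (2 * n))) (s : ℕ) : ℕ :=
  ((Finset.Ico (s + 1) n).filter fun t => ltD n (valP w t) (valP w s)).card

/-- `b_s(w) = #{t ∈ [s+1,n] : w(s) ≻ σ(w(t))}` in the partial order of `D_n`
(0-based `s`). -/
def bD (n : ℕ) (w : Equiv.Perm (Fin (2 * n))) (s : ℕ) : ℕ :=
  ((Finset.Ico (s + 1) n).filter fun t => ltD n (2 * n - 1 - valP w t) (valP w s)).card


namespace TypeD


/-- simplified inversion counts -/
def AA (n : ℕ) (F : ℕ → ℕ) (s : ℕ) : ℕ :=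
  ((Finset.Ico (s + 1) n).filter fun t => F t < F s).card

def BB (n : ℕ) (F : ℕ → ℕ) (s : ℕ) : ℕ :=
  ((Finset.Ico (s + 1) n).filter fun t => 2 * n ≤ F s + F t).card

def NN (n : ℕ) (F : ℕ → ℕ) : ℕ := ∑ s ∈ Finset.range n, (AA n F s + BB n F s)

/-- card of a filter is invariant under swapping the predicate at two points. -/
lemma card_filter_swap {S : Finset ℕ} {p q : ℕ → Prop} [DecidablePred p] [DecidablePred q]
    {a b : ℕ} (ha : a ∈ S) (hb : b ∈ S) (h1 : p a ↔ q b) (h2 : p b ↔ q a)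
    (h3 : ∀ t ∈ S, t ≠ a → t ≠ b → (p t ↔ q t)) :
    (S.filter p).card = (S.filter q).card := by
  rw [Finset.card_filter, Finset.card_filter]
  refine Finset.sum_equiv (Equiv.swap a b) (fun i => ?_) (fun i hi => ?_)
  · constructor <;> intro h
    · rcases eq_or_ne i a with rfl | hia
      · simpa [Equiv.swap_apply_left] using hb
      rcases eq_or_ne i b with rfl | hib
      · simpa [Equiv.swap_apply_right] using ha
      · rwa [Equiv.swap_apply_of_ne_of_ne hia hib]
    · rcases eq_or_ne i a with rfl | hia
      · exact ha
      rcases eq_or_ne i b with rfl | hib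
      · exact hb
      · rwa [Equiv.swap_apply_of_ne_of_ne hia hib] at h
  · rcases eq_or_ne i a with rfl | hia
    · simp only [Equiv.swap_apply_left]
      simp [h1]
    rcases eq_or_ne i b with rfl | hib
    · simp only [Equiv.swap_apply_right]
      simp [h2]
    · rw [Equiv.swap_apply_of_ne_of_ne hia hib]
      simp [h3 i hi hia hib]

lemma sum_swap_pair {S : Finset ℕ} {f g : ℕ → ℕ} {a b : ℕ} (ha : a ∈ S) (hb : b ∈ S)
    (h1 : f a = g b) (h2 : f b = g a) (h3 : ∀ t ∈ S, t ≠ a → t ≠ b → f t = g t) :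
    ∑ t ∈ S, f t = ∑ t ∈ S, g t := by
  refine Finset.sum_equiv (Equiv.swap a b) (fun i => ?_) (fun i hi => ?_)
  · constructor <;> intro h
    · rcases eq_or_ne i a with rfl | hia
      · simpa [Equiv.swap_apply_left] using hb
      rcases eq_or_ne i b with rfl | hib
      · simpa [Equiv.swap_apply_right] using ha
      · rwa [Equiv.swap_apply_of_ne_of_ne hia hib]
    · rcases eq_or_ne i a with rfl | hia
      · exact ha
      rcases eq_or_ne i b with rfl | hib
      · exact hb
      · rwa [Equiv.swap_apply_of_ne_of_ne hia hib] at h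
  · rcases eq_or_ne i a with rfl | hia
    · rw [Equiv.swap_apply_left]; exact h1
    rcases eq_or_ne i b with rfl | hib
    · rw [Equiv.swap_apply_right]; exact h2
    · rw [Equiv.swap_apply_of_ne_of_ne hia hib]; exact h3 i hi hia hib

/-- Splitting: filter over `Ico s n` (with `s < n`) = indicator at `s` + filter over `Ico (s+1) n`. -/
lemma card_filter_Ico_split {n s : ℕ} (h : s < n) (p : ℕ → Prop) [DecidablePred p] :
    ((Finset.Ico s n).filter p).card
      = (if p s then 1 else 0) + ((Finset.Ico (s + 1) n).filter p).card := by
  rw [← Finset.insert_Ico_add_one_left_eq_Ico h, Finset.filter_insert]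
  have hs : s ∉ (Finset.Ico (s + 1) n).filter p := by
    simp [Finset.mem_filter]
  split
  · rw [Finset.card_insert_of_notMem hs]; omega
  · omega

lemma NN_split (n : ℕ) (F : ℕ → ℕ) {a b : ℕ} (hab : a ≠ b) (han : a < n) (hbn : b < n) :
    NN n F = (∑ u ∈ ((Finset.range n).erase a).erase b, (AA n F u + BB n F u))
      + (AA n F a + BB n F a) + (AA n F b + BB n F b) := by
  unfold NN
  rw [← Finset.add_sum_erase _ _ (Finset.mem_range.mpr han)]
  rw [← Finset.add_sum_erase _ _ (show b ∈ (Finset.range n).erase a by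
    simp [Finset.mem_erase, Ne.symm hab, hbn])]
  ring

/-- Key lemma 1: effect of an adjacent swap at positions `s-1, s` (both `< n`). -/
lemma key1 {n s : ℕ} (h1 : 1 ≤ s) (h2 : s < n) (F G : ℕ → ℕ)
    (hG1 : G (s - 1) = F s) (hG2 : G s = F (s - 1))
    (hGo : ∀ u, u < n → u ≠ s - 1 → u ≠ s → G u = F u) :
    NN n G + (if F s < F (s - 1) then 1 else 0)
      = NN n F + (if F (s - 1) < F s then 1 else 0) := by
  have hs1n : s - 1 < n := by omega
  have hne : s - 1 ≠ s := by omega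
  rw [NN_split n G hne hs1n h2, NN_split n F hne hs1n h2]
  have hsame : ∀ u ∈ ((Finset.range n).erase (s - 1)).erase s,
      AA n G u + BB n G u = AA n F u + BB n F u := by
    intro u hu
    simp only [Finset.mem_erase, Finset.mem_range] at hu
    obtain ⟨hus, hus1, hun⟩ := hu
    have hGu : G u = F u := hGo u hun hus1 hus
    rcases lt_or_ge u s with hlt | hge
    · -- u ≤ s - 2, so both s-1 and s are in Ico (u+1) n
      have hu2 : u < s - 1 := by omega
      have hm1 : s - 1 ∈ Finset.Ico (u + 1) n := by simp [Finset.mem_Ico]; omega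
      have hm2 : s ∈ Finset.Ico (u + 1) n := by simp [Finset.mem_Ico]; omega
      have hA : AA n G u = AA n F u := by
        apply card_filter_swap hm1 hm2 (by rw [hG1, hGu]) (by rw [hG2, hGu])
        intro t ht ht1 ht2
        have htn : t < n := (Finset.mem_Ico.mp ht).2
        rw [hGo t htn ht1 ht2, hGu]
      have hB : BB n G u = BB n F u := by
        apply card_filter_swap hm1 hm2 (by rw [hG1, hGu]) (by rw [hG2, hGu])
        intro t ht ht1 ht2
        have htn : t < n := (Finset.mem_Ico.mp ht).2
        rw [hGo t htn ht1 ht2, hGu]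
      rw [hA, hB]
    · -- u ≥ s + 1 : everything in Ico (u+1) n is above s
      have hA : AA n G u = AA n F u := by
        unfold AA
        congr 1
        apply Finset.filter_congr
        intro t ht
        simp only [Finset.mem_Ico] at ht
        rw [hGo t (by omega) (by omega) (by omega), hGu]
      have hB : BB n G u = BB n F u := by
        unfold BB
        congr 1
        apply Finset.filter_congr
        intro t ht
        simp only [Finset.mem_Ico] at ht
        rw [hGo t (by omega) (by omega) (by omega), hGu]
      rw [hA, hB]
  rw [Finset.sum_congr rfl hsame]
  -- now the boundary terms
  have hCeq : ∀ (H : ℕ → ℕ), Finset.Ico (s - 1 + 1) n = Finset.Ico s n := by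
    intro _; congr 1; omega
  have e1 : AA n G (s - 1) = (if F (s-1) < F s then 1 else 0) + AA n F s := by
    unfold AA
    rw [hCeq F, card_filter_Ico_split h2]
    congr 1
    · rw [hG2, hG1]
    · congr 1
      apply Finset.filter_congr
      intro t ht
      simp only [Finset.mem_Ico] at ht
      rw [hGo t (by omega) (by omega) (by omega), hG1]
  have e2 : BB n G (s - 1) = (if 2 * n ≤ F (s - 1) + F s then 1 else 0) + BB n F s := by
    unfold BB
    rw [hCeq F, card_filter_Ico_split h2]
    congr 1
    · rw [hG2, hG1]
      simp [Nat.add_comm]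
    · congr 1
      apply Finset.filter_congr
      intro t ht
      simp only [Finset.mem_Ico] at ht
      rw [hGo t (by omega) (by omega) (by omega), hG1]
  have e3 : AA n F (s - 1) = (if F s < F (s - 1) then 1 else 0)
      + ((Finset.Ico (s + 1) n).filter fun t => F t < F (s - 1)).card := by
    unfold AA
    rw [hCeq F, card_filter_Ico_split h2]
  have e4 : BB n F (s - 1) = (if 2 * n ≤ F (s - 1) + F s then 1 else 0)
      + ((Finset.Ico (s + 1) n).filter fun t => 2 * n ≤ F (s - 1) + F t).card := by
    unfold BB
    rw [hCeq F, card_filter_Ico_split h2]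
  have e5 : AA n G s = ((Finset.Ico (s + 1) n).filter fun t => F t < F (s - 1)).card := by
    unfold AA
    congr 1
    apply Finset.filter_congr
    intro t ht
    simp only [Finset.mem_Ico] at ht
    rw [hGo t (by omega) (by omega) (by omega), hG2]
  have e6 : BB n G s = ((Finset.Ico (s + 1) n).filter fun t => 2 * n ≤ F (s - 1) + F t).card := by
    unfold BB
    congr 1
    apply Finset.filter_congr
    intro t ht
    simp only [Finset.mem_Ico] at ht
    rw [hGo t (by omega) (by omega) (by omega), hG2]
  rw [e1, e2, e3, e4, e5, e6]
  split_ifs <;> omega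


lemma AB_as_sum (n : ℕ) (H : ℕ → ℕ) (u : ℕ) :
    AA n H u + BB n H u = ∑ t ∈ Finset.Ico (u + 1) n,
      ((if H t < H u then 1 else 0) + (if 2 * n ≤ H u + H t then 1 else 0)) := by
  unfold AA BB
  rw [Finset.sum_add_distrib, Finset.card_filter, Finset.card_filter]

/-- Key lemma 2: effect of the special generator on positions `n-2, n-1`. -/
lemma key2 {n : ℕ} (h2 : 2 ≤ n) (F G : ℕ → ℕ)
    (hFlt : ∀ u, u < n → F u < 2 * n)
    (hG1 : G (n - 2) = 2 * n - 1 - F (n - 1)) (hG2 : G (n - 1) = 2 * n - 1 - F (n - 2))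
    (hGo : ∀ u, u < n → u ≠ n - 2 → u ≠ n - 1 → G u = F u) :
    NN n G + (if 2 * n ≤ F (n - 2) + F (n - 1) then 1 else 0)
      = NN n F + (if F (n - 2) + F (n - 1) ≤ 2 * n - 2 then 1 else 0) := by
  have hne : (n - 2 : ℕ) ≠ n - 1 := by omega
  have hx1 : F (n - 1) < 2 * n := hFlt _ (by omega)
  have hx2 : F (n - 2) < 2 * n := hFlt _ (by omega)
  rw [NN_split n G hne (by omega) (by omega), NN_split n F hne (by omega) (by omega)]
  have hsame : ∀ u ∈ ((Finset.range n).erase (n - 2)).erase (n - 1),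
      AA n G u + BB n G u = AA n F u + BB n F u := by
    intro u hu
    simp only [Finset.mem_erase, Finset.mem_range] at hu
    obtain ⟨hu1, hu2, hun⟩ := hu
    have huu : u < n - 2 := by omega
    have hGu : G u = F u := hGo u hun hu2 hu1
    rw [AB_as_sum, AB_as_sum]
    refine sum_swap_pair (a := n - 2) (b := n - 1) (by simp [Finset.mem_Ico]; omega)
      (by simp [Finset.mem_Ico]; omega) ?_ ?_ ?_
    · rw [hG1, hGu]
      split_ifs <;> omega
    · rw [hG2, hGu]
      split_ifs <;> omega
    · intro t ht ht1 ht2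
      have htn : t < n := (Finset.mem_Ico.mp ht).2
      rw [hGo t htn ht1 ht2, hGu]
  rw [Finset.sum_congr rfl hsame]
  have hempty : ∀ (H : ℕ → ℕ), AA n H (n - 1) + BB n H (n - 1) = 0 := by
    intro H
    unfold AA BB
    rw [show n - 1 + 1 = n by omega]
    simp
  have hsing : ∀ (H : ℕ → ℕ), Finset.Ico (n - 2 + 1) n = ({n - 1} : Finset ℕ) := by
    intro _
    ext x
    simp only [Finset.mem_Ico, Finset.mem_singleton]
    omega
  have hAt : ∀ (H : ℕ → ℕ), AA n H (n - 2) = if H (n - 1) < H (n - 2) then 1 else 0 := by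
    intro H
    unfold AA
    rw [hsing H, Finset.filter_singleton]
    split_ifs <;> simp
  have hBt : ∀ (H : ℕ → ℕ), BB n H (n - 2) = if 2 * n ≤ H (n - 2) + H (n - 1) then 1 else 0 := by
    intro H
    unfold BB
    rw [hsing H, Finset.filter_singleton]
    split_ifs <;> simp
  rw [hempty G, hempty F, hAt G, hAt F, hBt G, hBt F, hG1, hG2]
  split_ifs <;> omega


section PermLayer

open Equiv

variable {n : ℕ}

lemma sigmaD_val (j : Fin (2*n)) : (sigmaD n j).val = 2*n - 1 - j.val := rfl

lemma sigmaD_mk (u : ℕ) (hu : u < 2*n) :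
    sigmaD n ⟨u, hu⟩ = ⟨2*n - 1 - u, by omega⟩ := rfl

lemma swap_mk_left {m a b c : ℕ} {ha : a < m} {hb : b < m} {hc : c < m} (h : c = a) :
    Equiv.swap (⟨a, ha⟩ : Fin m) ⟨b, hb⟩ ⟨c, hc⟩ = ⟨b, hb⟩ := by
  subst h; exact Equiv.swap_apply_left _ _

lemma swap_mk_right {m a b c : ℕ} {ha : a < m} {hb : b < m} {hc : c < m} (h : c = b) :
    Equiv.swap (⟨a, ha⟩ : Fin m) ⟨b, hb⟩ ⟨c, hc⟩ = ⟨a, ha⟩ := by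
  subst h; exact Equiv.swap_apply_right _ _

lemma swap_mk_ne {m a b c : ℕ} {ha : a < m} {hb : b < m} {hc : c < m}
    (h1 : c ≠ a) (h2 : c ≠ b) :
    Equiv.swap (⟨a, ha⟩ : Fin m) ⟨b, hb⟩ ⟨c, hc⟩ = ⟨c, hc⟩ :=
  Equiv.swap_apply_of_ne_of_ne (Fin.ne_of_val_ne h1) (Fin.ne_of_val_ne h2)

/-- The generator `r_s`, `1 ≤ s < n`. -/
def gA (n s : ℕ) (h1 : 1 ≤ s) (h2 : s < n) : Equiv.Perm (Fin (2*n)) :=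
  Equiv.swap ⟨s - 1, by omega⟩ ⟨s, by omega⟩ *
    Equiv.swap ⟨2*n - 1 - (s - 1), by omega⟩ ⟨2*n - 1 - s, by omega⟩

/-- The generator `r_n`. -/
def gB (n : ℕ) (h : 2 ≤ n) : Equiv.Perm (Fin (2*n)) :=
  Equiv.swap ⟨n - 2, by omega⟩ ⟨n, by omega⟩ *
    Equiv.swap ⟨2*n - 1 - (n - 2), by omega⟩ ⟨2*n - 1 - n, by omega⟩

lemma gA_mem (s : ℕ) (h1 : 1 ≤ s) (h2 : s < n) : gA n s h1 h2 ∈ genD n := by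
  apply Set.mem_union_left
  exact ⟨s, h1, h2, rfl⟩

lemma gB_mem (h : 2 ≤ n) : gB n h ∈ genD n := by
  apply Set.mem_union_right
  exact ⟨h, rfl⟩

lemma gA_apply_mk (s : ℕ) (h1 : 1 ≤ s) (h2 : s < n) (u : ℕ) (hu : u < 2*n) :
    gA n s h1 h2 ⟨u, hu⟩ =
      if u = s - 1 then ⟨s, by omega⟩
      else if u = s then ⟨s - 1, by omega⟩
      else if u = 2*n - 1 - (s - 1) then ⟨2*n - 1 - s, by omega⟩
      else if u = 2*n - 1 - s then ⟨2*n - 1 - (s - 1), by omega⟩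
      else ⟨u, hu⟩ := by
  unfold gA
  rw [Equiv.Perm.mul_apply]
  split_ifs with e1 e2 e3 e4
  · rw [swap_mk_ne (a := 2*n - 1 - (s - 1)) (b := 2*n - 1 - s) (c := u) (by omega) (by omega),
      swap_mk_left e1]
  · rw [swap_mk_ne (a := 2*n - 1 - (s - 1)) (b := 2*n - 1 - s) (c := u) (by omega) (by omega),
      swap_mk_right e2]
  · rw [swap_mk_left e3, swap_mk_ne (by omega) (by omega)]
  · rw [swap_mk_right e4, swap_mk_ne (by omega) (by omega)]
  · rw [swap_mk_ne e3 e4, swap_mk_ne e1 e2]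

lemma gB_apply_mk (h : 2 ≤ n) (u : ℕ) (hu : u < 2*n) :
    gB n h ⟨u, hu⟩ =
      if u = n - 2 then ⟨n, by omega⟩
      else if u = n then ⟨n - 2, by omega⟩
      else if u = 2*n - 1 - (n - 2) then ⟨2*n - 1 - n, by omega⟩
      else if u = 2*n - 1 - n then ⟨2*n - 1 - (n - 2), by omega⟩
      else ⟨u, hu⟩ := by
  unfold gB
  rw [Equiv.Perm.mul_apply]
  split_ifs with e1 e2 e3 e4
  · rw [swap_mk_ne (a := 2*n - 1 - (n - 2)) (b := 2*n - 1 - n) (c := u) (by omega) (by omega),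
      swap_mk_left e1]
  · rw [swap_mk_ne (a := 2*n - 1 - (n - 2)) (b := 2*n - 1 - n) (c := u) (by omega) (by omega),
      swap_mk_right e2]
  · rw [swap_mk_left e3, swap_mk_ne (by omega) (by omega)]
  · rw [swap_mk_right e4, swap_mk_ne (by omega) (by omega)]
  · rw [swap_mk_ne e3 e4, swap_mk_ne e1 e2]

lemma valP_lt (w : Equiv.Perm (Fin (2*n))) {u : ℕ} (hu : u < 2*n) : valP w u < 2*n := by
  unfold valP
  rw [dif_pos hu]
  exact (w ⟨u, hu⟩).isLt

lemma valP_inj (w : Equiv.Perm (Fin (2*n))) {u v : ℕ} (hu : u < 2*n) (hv : v < 2*n)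
    (h : valP w u = valP w v) : u = v := by
  unfold valP at h
  rw [dif_pos hu, dif_pos hv] at h
  have := w.injective (Fin.ext h)
  exact congrArg Fin.val this

lemma valP_sigma (w : Equiv.Perm (Fin (2*n)))
    (hcomm : ∀ j, w (sigmaD n j) = sigmaD n (w j)) {u : ℕ} (hu : u < 2*n) :
    valP w (2*n - 1 - u) = 2*n - 1 - valP w u := by
  unfold valP
  rw [dif_pos (by omega : 2*n - 1 - u < 2*n), dif_pos hu]
  have h := hcomm ⟨u, hu⟩
  rw [sigmaD_mk u hu] at h
  calc (w ⟨2*n - 1 - u, by omega⟩).val = (sigmaD n (w ⟨u, hu⟩)).val := by rw [← h]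
    _ = 2*n - 1 - (w ⟨u, hu⟩).val := sigmaD_val _

lemma valP_orb (w : Equiv.Perm (Fin (2*n)))
    (hcomm : ∀ j, w (sigmaD n j) = sigmaD n (w j)) {s t : ℕ} (hs : s < n) (ht : t < n)
    (hst : s ≠ t) : valP w s + valP w t ≠ 2*n - 1 := by
  intro h
  have h1 := valP_sigma w hcomm (u := t) (by omega)
  have h2 : valP w t < 2*n := valP_lt w (by omega)
  have h3 : valP w (2*n - 1 - t) = valP w s := by omega
  have := valP_inj w (u := 2*n - 1 - t) (v := s) (by omega) (by omega) h3
  omega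

lemma valP_mul (w g : Equiv.Perm (Fin (2*n))) {u : ℕ} (hu : u < 2*n) :
    valP (w * g) u = valP w (g ⟨u, hu⟩).val := by
  unfold valP
  rw [dif_pos hu, dif_pos (g ⟨u, hu⟩).isLt]
  rw [Equiv.Perm.mul_apply]

lemma valP_mul_gA (s : ℕ) (h1 : 1 ≤ s) (h2 : s < n) (w : Equiv.Perm (Fin (2*n)))
    (u : ℕ) (hun : u < n) :
    valP (w * gA n s h1 h2) u
      = valP w (if u = s - 1 then s else if u = s then s - 1 else u) := by
  rw [valP_mul w _ (by omega : u < 2*n), gA_apply_mk s h1 h2 u (by omega)]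
  split_ifs with e1 e2 e3 e4 <;> first | rfl | omega

lemma valP_mul_gB (h : 2 ≤ n) (w : Equiv.Perm (Fin (2*n)))
    (hcomm : ∀ j, w (sigmaD n j) = sigmaD n (w j)) (u : ℕ) (hun : u < n) :
    valP (w * gB n h) u
      = if u = n - 2 then 2*n - 1 - valP w (n - 1)
        else if u = n - 1 then 2*n - 1 - valP w (n - 2) else valP w u := by
  have hA : valP w n = 2*n - 1 - valP w (n - 1) := by
    have h0 := valP_sigma w hcomm (u := n - 1) (by omega)
    rw [show 2*n - 1 - (n - 1) = n by omega] at h0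
    exact h0
  have hB : valP w (2*n - 1 - (n - 2)) = 2*n - 1 - valP w (n - 2) :=
    valP_sigma w hcomm (by omega)
  rw [valP_mul w _ (by omega : u < 2*n), gB_apply_mk h u (by omega)]
  split_ifs <;> first | rfl | omega | exact hA | exact hB

end PermLayer

section Comm

open Equiv

variable {n : ℕ}

lemma sigmaD_mul_self : sigmaD n * sigmaD n = 1 := by
  apply Equiv.ext
  intro j
  apply Fin.ext
  rw [Equiv.Perm.mul_apply]
  have hj := j.isLt
  rw [sigmaD_val, sigmaD_val]
  show 2*n - 1 - (2*n - 1 - j.val) = j.val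
  omega

lemma mk_ne_mk {m a b : ℕ} {ha : a < m} {hb : b < m} (h : a ≠ b) :
    (⟨a, ha⟩ : Fin m) ≠ ⟨b, hb⟩ := Fin.ne_of_val_ne h

lemma swap_commute_of_disjoint {α : Type*} [DecidableEq α] {a b c d : α}
    (h1 : a ≠ c) (h2 : a ≠ d) (h3 : b ≠ c) (h4 : b ≠ d) :
    Commute (Equiv.swap a b) (Equiv.swap c d) := by
  apply Equiv.Perm.Disjoint.commute
  intro x
  by_cases hx : x = a ∨ x = b
  · right
    rcases hx with rfl | rfl
    · exact Equiv.swap_apply_of_ne_of_ne h1 h2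
    · exact Equiv.swap_apply_of_ne_of_ne h3 h4
  · left
    push_neg at hx
    exact Equiv.swap_apply_of_ne_of_ne hx.1 hx.2

lemma gA_comm_sigma (s : ℕ) (h1 : 1 ≤ s) (h2 : s < n) (j : Fin (2*n)) :
    gA n s h1 h2 (sigmaD n j) = sigmaD n (gA n s h1 h2 j) := by
  obtain ⟨u, hu⟩ := j
  rw [sigmaD_mk u hu, gA_apply_mk s h1 h2 (2*n - 1 - u) (by omega),
    gA_apply_mk s h1 h2 u hu]
  apply Fin.ext
  rw [sigmaD_val]
  split_ifs <;> simp only [Fin.val_mk] <;> omega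

lemma gB_comm_sigma (h : 2 ≤ n) (j : Fin (2*n)) :
    gB n h (sigmaD n j) = sigmaD n (gB n h j) := by
  obtain ⟨u, hu⟩ := j
  rw [sigmaD_mk u hu, gB_apply_mk h (2*n - 1 - u) (by omega), gB_apply_mk h u hu]
  apply Fin.ext
  rw [sigmaD_val]
  split_ifs <;> simp only [Fin.val_mk] <;> omega

lemma two_swaps_sq {α : Type*} [DecidableEq α] {a b c d : α}
    (h1 : a ≠ c) (h2 : a ≠ d) (h3 : b ≠ c) (h4 : b ≠ d) :
    (Equiv.swap a b * Equiv.swap c d) * (Equiv.swap a b * Equiv.swap c d) = 1 := by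
  have hc : Equiv.swap c d * Equiv.swap a b = Equiv.swap a b * Equiv.swap c d :=
    (swap_commute_of_disjoint h1 h2 h3 h4).eq.symm
  calc Equiv.swap a b * Equiv.swap c d * (Equiv.swap a b * Equiv.swap c d)
      = Equiv.swap a b * (Equiv.swap c d * Equiv.swap a b * Equiv.swap c d) := by
        rw [mul_assoc]; rw [← mul_assoc (Equiv.swap c d)]
    _ = Equiv.swap a b * (Equiv.swap a b * Equiv.swap c d * Equiv.swap c d) := by rw [hc]
    _ = Equiv.swap a b * (Equiv.swap a b * (Equiv.swap c d * Equiv.swap c d)) := by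
        rw [mul_assoc (Equiv.swap a b) (Equiv.swap c d)]
    _ = 1 := by rw [Equiv.swap_mul_self, mul_one, Equiv.swap_mul_self]

lemma gA_sq (s : ℕ) (h1 : 1 ≤ s) (h2 : s < n) : gA n s h1 h2 * gA n s h1 h2 = 1 := by
  unfold gA
  exact two_swaps_sq (mk_ne_mk (by omega)) (mk_ne_mk (by omega))
    (mk_ne_mk (by omega)) (mk_ne_mk (by omega))

lemma gB_sq (h : 2 ≤ n) : gB n h * gB n h = 1 := by
  unfold gB
  exact two_swaps_sq (mk_ne_mk (by omega)) (mk_ne_mk (by omega))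
    (mk_ne_mk (by omega)) (mk_ne_mk (by omega))

end Comm

section Main

open Equiv

variable {n : ℕ}

def countB (n : ℕ) (w : Equiv.Perm (Fin (2*n))) : ℕ :=
  ((Finset.range n).filter fun s => n ≤ valP w s).card

lemma sum_split_two {f : ℕ → ℕ} {n a b : ℕ} (hab : a ≠ b) (ha : a < n) (hb : b < n) :
    ∑ u ∈ Finset.range n, f u
      = (∑ u ∈ ((Finset.range n).erase a).erase b, f u) + f a + f b := by
  rw [← Finset.add_sum_erase _ _ (Finset.mem_range.mpr ha)]
  rw [← Finset.add_sum_erase _ _ (show b ∈ (Finset.range n).erase a by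
    simp [Finset.mem_erase, Ne.symm hab, hb])]
  ring

lemma countB_mul_gA (s : ℕ) (h1 : 1 ≤ s) (h2 : s < n) (w : Equiv.Perm (Fin (2*n))) :
    countB n (w * gA n s h1 h2) = countB n w := by
  unfold countB
  refine card_filter_swap (a := s - 1) (b := s) (Finset.mem_range.mpr (by omega))
    (Finset.mem_range.mpr h2) ?_ ?_ ?_
  · rw [valP_mul_gA s h1 h2 w (s-1) (by omega), if_pos rfl]
  · rw [valP_mul_gA s h1 h2 w s (by omega), if_neg (by omega), if_pos rfl]
  · intro t ht ht1 ht2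
    rw [valP_mul_gA s h1 h2 w t (Finset.mem_range.mp ht), if_neg ht1, if_neg ht2]

lemma countB_mul_gB (h : 2 ≤ n) (w : Equiv.Perm (Fin (2*n)))
    (hcomm : ∀ j, w (sigmaD n j) = sigmaD n (w j)) (he : Even (countB n w)) :
    Even (countB n (w * gB n h)) := by
  have hx : valP w (n-2) < 2*n := valP_lt w (by omega)
  have hy : valP w (n-1) < 2*n := valP_lt w (by omega)
  unfold countB at he ⊢
  rw [Finset.card_filter] at he ⊢
  rw [sum_split_two (a := n-2) (b := n-1) (by omega) (by omega) (by omega)] at he ⊢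
  have hrest : ∀ u ∈ ((Finset.range n).erase (n-2)).erase (n-1),
      (if n ≤ valP (w * gB n h) u then 1 else 0) = (if n ≤ valP w u then 1 else 0) := by
    intro u hu
    simp only [Finset.mem_erase, Finset.mem_range] at hu
    rw [valP_mul_gB h w hcomm u hu.2.2, if_neg hu.2.1, if_neg hu.1]
  rw [Finset.sum_congr rfl hrest]
  rw [valP_mul_gB h w hcomm (n-2) (by omega), if_pos (show n-2 = n-2 from rfl)]
  rw [valP_mul_gB h w hcomm (n-1) (by omega), if_neg (show ¬(n-1 = n-2) by omega),
    if_pos (show n-1 = n-1 from rfl)]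
  rw [Nat.even_iff] at he ⊢
  split_ifs at he ⊢ <;> omega

lemma NN_key_gA (s : ℕ) (h1 : 1 ≤ s) (h2 : s < n) (w : Equiv.Perm (Fin (2*n))) :
    NN n (valP (w * gA n s h1 h2)) + (if valP w s < valP w (s-1) then 1 else 0)
      = NN n (valP w) + (if valP w (s-1) < valP w s then 1 else 0) := by
  apply key1 h1 h2
  · rw [valP_mul_gA s h1 h2 w (s-1) (by omega), if_pos rfl]
  · rw [valP_mul_gA s h1 h2 w s (by omega), if_neg (by omega), if_pos rfl]
  · intro u hun hu1 hu2
    rw [valP_mul_gA s h1 h2 w u hun, if_neg hu1, if_neg hu2]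

lemma NN_mul_gA_eq (s : ℕ) (h1 : 1 ≤ s) (h2 : s < n) (w : Equiv.Perm (Fin (2*n)))
    (hd : valP w s < valP w (s-1)) :
    NN n (valP (w * gA n s h1 h2)) + 1 = NN n (valP w) := by
  have hk := NN_key_gA s h1 h2 w
  rw [if_pos hd, if_neg (by omega)] at hk
  omega

lemma NN_mul_gA_le (s : ℕ) (h1 : 1 ≤ s) (h2 : s < n) (w : Equiv.Perm (Fin (2*n))) :
    NN n (valP (w * gA n s h1 h2)) ≤ NN n (valP w) + 1 := by
  have hk := NN_key_gA s h1 h2 w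
  split_ifs at hk <;> omega

lemma NN_key_gB (h : 2 ≤ n) (w : Equiv.Perm (Fin (2*n)))
    (hcomm : ∀ j, w (sigmaD n j) = sigmaD n (w j)) :
    NN n (valP (w * gB n h)) + (if 2*n ≤ valP w (n-2) + valP w (n-1) then 1 else 0)
      = NN n (valP w) + (if valP w (n-2) + valP w (n-1) ≤ 2*n - 2 then 1 else 0) := by
  apply key2 h
  · intro u hu; exact valP_lt w (by omega)
  · rw [valP_mul_gB h w hcomm (n-2) (by omega), if_pos rfl]
  · rw [valP_mul_gB h w hcomm (n-1) (by omega), if_neg (by omega), if_pos rfl]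
  · intro u hun hu1 hu2
    rw [valP_mul_gB h w hcomm u hun, if_neg hu1, if_neg hu2]

lemma NN_mul_gB_eq (h : 2 ≤ n) (w : Equiv.Perm (Fin (2*n)))
    (hcomm : ∀ j, w (sigmaD n j) = sigmaD n (w j))
    (hbig : 2*n ≤ valP w (n-2) + valP w (n-1)) :
    NN n (valP (w * gB n h)) + 1 = NN n (valP w) := by
  have hk := NN_key_gB h w hcomm
  rw [if_pos hbig, if_neg (by omega)] at hk
  omega

lemma NN_mul_gB_le (h : 2 ≤ n) (w : Equiv.Perm (Fin (2*n)))
    (hcomm : ∀ j, w (sigmaD n j) = sigmaD n (w j)) :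
    NN n (valP (w * gB n h)) ≤ NN n (valP w) + 1 := by
  have hk := NN_key_gB h w hcomm
  split_ifs at hk <;> omega

lemma valP_one {u : ℕ} (hu : u < 2*n) : valP (1 : Equiv.Perm (Fin (2*n))) u = u := by
  unfold valP
  rw [dif_pos hu]
  rfl

lemma NN_one : NN n (valP (1 : Equiv.Perm (Fin (2*n)))) = 0 := by
  unfold NN
  apply Finset.sum_eq_zero
  intro s hs
  have hsn := Finset.mem_range.mp hs
  unfold AA BB
  have h1 : ∀ t ∈ Finset.Ico (s+1) n, ¬ (valP (1 : Equiv.Perm (Fin (2*n))) t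
      < valP (1 : Equiv.Perm (Fin (2*n))) s) := by
    intro t ht
    have h := Finset.mem_Ico.mp ht
    rw [valP_one (by omega), valP_one (by omega)]
    omega
  have h2 : ∀ t ∈ Finset.Ico (s+1) n, ¬ (2*n ≤ valP (1 : Equiv.Perm (Fin (2*n))) s
      + valP (1 : Equiv.Perm (Fin (2*n))) t) := by
    intro t ht
    have h := Finset.mem_Ico.mp ht
    rw [valP_one (by omega), valP_one (by omega)]
    omega
  rw [Finset.filter_false_of_mem h1, Finset.filter_false_of_mem h2]
  simp

lemma mono_of_adj {F : ℕ → ℕ} (h : ∀ s, 1 ≤ s → s < n → F (s-1) < F s) :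
    ∀ s t, s < t → t < n → F s < F t := by
  intro s t
  induction t with
  | zero => omega
  | succ k ih =>
    intro hst hkn
    have hk : F k < F (k+1) := by
      have := h (k+1) (by omega) hkn
      simpa using this
    rcases Nat.lt_succ_iff_lt_or_eq.mp hst with hlt | rfl
    · exact lt_trans (ih hlt (by omega)) hk
    · exact hk

lemma gap_of_mono {F : ℕ → ℕ} (h : ∀ s t, s < t → t < n → F s < F t) :
    ∀ d u, u + d < n → F u + d ≤ F (u + d) := by
  intro d
  induction d with
  | zero =>
    intro u _
    have h0 : F (u + 0) = F u := by rw [Nat.add_zero]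
    omega
  | succ k ih =>
    intro u hu
    have h1 := ih u (by omega)
    have h2 := h (u + k) (u + k + 1) (by omega) (by omega)
    have h3 : F (u + (k+1)) = F (u + k + 1) := by rw [Nat.add_succ]
    omega

lemma base_F (hn : 2 ≤ n) (F : ℕ → ℕ)
    (hinj : ∀ s, s < 2*n → ∀ t, t < 2*n → F s = F t → s = t)
    (horb : ∀ s, s < n → ∀ t, t < n → s ≠ t → F s + F t ≠ 2*n - 1)
    (hmono : ∀ s t, s < t → t < n → F s < F t)
    (hsum : F (n-2) + F (n-1) ≤ 2*n - 1) :
    (∀ u, u < n - 1 → F u = u) ∧ (F (n-1) = n - 1 ∨ F (n-1) = n) := by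
  have hsum2 : F (n-2) + F (n-1) ≤ 2*n - 2 := by
    have := horb (n-2) (by omega) (n-1) (by omega) (by omega)
    omega
  have h21 : F (n-2) < F (n-1) := hmono (n-2) (n-1) (by omega) (by omega)
  have h2b : F (n-2) ≤ n - 2 := by omega
  have hup : ∀ u, u < n - 1 → F u ≤ u := by
    intro u hu
    rcases eq_or_lt_of_le (show u ≤ n - 2 by omega) with rfl | hlt
    · exact h2b
    · have := gap_of_mono hmono (n - 2 - u) u (by omega)
      rw [show u + (n - 2 - u) = n - 2 by omega] at this
      omega
  have hlow : ∀ u, u < n → u ≤ F u := by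
    intro u hu
    rcases Nat.eq_zero_or_pos u with rfl | hpos
    · omega
    · have := gap_of_mono hmono u 0 (by omega)
      simp at this
      omega
  constructor
  · intro u hu
    have := hup u hu
    have := hlow u (by omega)
    omega
  · have := hlow (n-1) (by omega)
    have := hlow (n-2) (by omega)
    omega

lemma w_eq_one (hn : 4 ≤ n) (w : Equiv.Perm (Fin (2*n)))
    (hcomm : ∀ j, w (sigmaD n j) = sigmaD n (w j)) (heven : Even (countB n w))
    (hmono : ∀ s t, s < t → t < n → valP w s < valP w t)
    (hsum : valP w (n-2) + valP w (n-1) ≤ 2*n - 1) : w = 1 := by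
  have hinj : ∀ s, s < 2*n → ∀ t, t < 2*n → valP w s = valP w t → s = t :=
    fun s hs t ht h => valP_inj w hs ht h
  have horb : ∀ s, s < n → ∀ t, t < n → s ≠ t → valP w s + valP w t ≠ 2*n - 1 :=
    fun s hs t ht hst => valP_orb w hcomm hs ht hst
  obtain ⟨hlow, hcase⟩ := base_F (by omega) (valP w) hinj horb hmono hsum
  have hlast : valP w (n-1) = n - 1 := by
    rcases hcase with h | h
    · exact h
    · exfalso
      have hfil : ((Finset.range n).filter fun s => n ≤ valP w s) = {n-1} := by
        ext x
        simp only [Finset.mem_filter, Finset.mem_range, Finset.mem_singleton]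
        constructor
        · rintro ⟨hx, hge⟩
          by_contra hne
          have hx1 : x < n - 1 := by omega
          have := hlow x hx1
          omega
        · rintro rfl
          exact ⟨by omega, by rw [h]⟩
      unfold countB at heven
      rw [hfil] at heven
      simp at heven
  have hFn : ∀ u, u < n → valP w u = u := by
    intro u hu
    rcases eq_or_lt_of_le (show u ≤ n - 1 by omega) with rfl | hlt
    · exact hlast
    · exact hlow u hlt
  have hFall : ∀ u, u < 2*n → valP w u = u := by
    intro u hu
    rcases lt_or_ge u n with h | h
    · exact hFn u h
    · have hs := valP_sigma w hcomm (u := 2*n - 1 - u) (by omega)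
      rw [show 2*n - 1 - (2*n - 1 - u) = u by omega] at hs
      rw [hFn (2*n - 1 - u) (by omega)] at hs
      omega
  apply Equiv.ext
  intro j
  have hj := j.isLt
  have h := hFall j.val hj
  unfold valP at h
  rw [dif_pos hj] at h
  have hje : (⟨j.val, hj⟩ : Fin (2*n)) = j := rfl
  rw [hje] at h
  apply Fin.ext
  rw [Equiv.Perm.one_apply]
  exact h

lemma exists_word (hn : 4 ≤ n) : ∀ N (w : Equiv.Perm (Fin (2*n))),
    (∀ j, w (sigmaD n j) = sigmaD n (w j)) → Even (countB n w) → NN n (valP w) = N →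
    ∃ l : List (Equiv.Perm (Fin (2*n))),
      (∀ x ∈ l, x ∈ genD n) ∧ l.prod = w ∧ l.length = N := by
  intro N
  induction N using Nat.strong_induction_on with
  | _ N ih =>
  intro w hcomm heven hNNw
  by_cases hdes : ∃ s, 1 ≤ s ∧ s < n ∧ valP w s < valP w (s - 1)
  · obtain ⟨s, hs1, hs2, hd⟩ := hdes
    have hEq := NN_mul_gA_eq s hs1 hs2 w hd
    have hcomm' : ∀ j, (w * gA n s hs1 hs2) (sigmaD n j)
        = sigmaD n ((w * gA n s hs1 hs2) j) := by
      intro j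
      rw [Equiv.Perm.mul_apply, Equiv.Perm.mul_apply, gA_comm_sigma, hcomm]
    have heven' : Even (countB n (w * gA n s hs1 hs2)) := by
      rw [countB_mul_gA]; exact heven
    have hlt : NN n (valP (w * gA n s hs1 hs2)) < N := by omega
    obtain ⟨l, hl1, hl2, hl3⟩ := ih _ hlt (w * gA n s hs1 hs2) hcomm' heven' rfl
    refine ⟨l ++ [gA n s hs1 hs2], ?_, ?_, ?_⟩
    · intro x hx
      rcases List.mem_append.mp hx with h | h
      · exact hl1 x h
      · rw [List.mem_singleton.mp h]; exact gA_mem s hs1 hs2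
    · rw [List.prod_append, List.prod_singleton, hl2, mul_assoc, gA_sq, mul_one]
    · rw [List.length_append, hl3]
      simp
      omega
  · push_neg at hdes
    have hmono : ∀ s t, s < t → t < n → valP w s < valP w t := by
      apply mono_of_adj
      intro s h1 h2
      have hle := hdes s h1 h2
      have hne : valP w (s-1) ≠ valP w s := by
        intro he
        have := valP_inj w (u := s-1) (v := s) (by omega) (by omega) he
        omega
      omega
    by_cases hbig : 2*n ≤ valP w (n-2) + valP w (n-1)
    · have h2n : 2 ≤ n := by omega
      have hEq := NN_mul_gB_eq h2n w hcomm hbig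
      have hcomm' : ∀ j, (w * gB n h2n) (sigmaD n j) = sigmaD n ((w * gB n h2n) j) := by
        intro j
        rw [Equiv.Perm.mul_apply, Equiv.Perm.mul_apply, gB_comm_sigma, hcomm]
      have heven' : Even (countB n (w * gB n h2n)) := countB_mul_gB h2n w hcomm heven
      have hlt : NN n (valP (w * gB n h2n)) < N := by omega
      obtain ⟨l, hl1, hl2, hl3⟩ := ih _ hlt (w * gB n h2n) hcomm' heven' rfl
      refine ⟨l ++ [gB n h2n], ?_, ?_, ?_⟩
      · intro x hx
        rcases List.mem_append.mp hx with h | h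
        · exact hl1 x h
        · rw [List.mem_singleton.mp h]; exact gB_mem h2n
      · rw [List.prod_append, List.prod_singleton, hl2, mul_assoc, gB_sq, mul_one]
      · rw [List.length_append, hl3]
        simp
        omega
    · have hw1 : w = 1 := w_eq_one hn w hcomm heven hmono (by omega)
      have hN0 : N = 0 := by
        rw [hw1, NN_one] at hNNw
        omega
      exact ⟨[], by simp, by simp [hw1], by simp [hN0]⟩

lemma word_bound (hn : 4 ≤ n) (l : List (Equiv.Perm (Fin (2*n))))
    (hmem : ∀ x ∈ l, x ∈ genD n) :
    (∀ j, l.prod (sigmaD n j) = sigmaD n (l.prod j)) ∧ NN n (valP l.prod) ≤ l.length := by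
  induction l using List.reverseRecOn with
  | nil =>
    constructor
    · intro j; simp
    · simp [NN_one]
  | append_singleton l g ihl =>
    have hml : ∀ x ∈ l, x ∈ genD n := fun x hx => hmem x (List.mem_append.mpr (Or.inl hx))
    obtain ⟨hcl, hbl⟩ := ihl hml
    have hg := hmem g (List.mem_append.mpr (Or.inr (List.mem_singleton.mpr rfl)))
    rw [List.prod_append, List.prod_singleton]
    rcases hg with hg | hg
    · obtain ⟨s, hs1, hs2, hgeq⟩ := hg
      have hgA : g = gA n s hs1 hs2 := by rw [hgeq]; rfl
      constructor
      · intro j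
        rw [hgA, Equiv.Perm.mul_apply, Equiv.Perm.mul_apply, gA_comm_sigma, hcl]
      · rw [hgA, List.length_append]
        have := NN_mul_gA_le s hs1 hs2 l.prod
        simp
        omega
    · obtain ⟨hh, hgeq⟩ := hg
      have hgB : g = gB n hh := by rw [hgeq]; rfl
      constructor
      · intro j
        rw [hgB, Equiv.Perm.mul_apply, Equiv.Perm.mul_apply, gB_comm_sigma, hcl]
      · rw [hgB, List.length_append]
        have := NN_mul_gB_le hh l.prod hcl
        simp
        omega

lemma aD_eq (w : Equiv.Perm (Fin (2*n)))
    (hcomm : ∀ j, w (sigmaD n j) = sigmaD n (w j)) (s : ℕ) (hs : s < n) :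
    aD n w s = AA n (valP w) s := by
  unfold aD AA
  congr 1
  apply Finset.filter_congr
  intro t ht
  have h := Finset.mem_Ico.mp ht
  unfold ltD
  constructor
  · rintro ⟨h1, _⟩; exact h1
  · intro h1
    refine ⟨h1, ?_⟩
    rintro ⟨ha, hb⟩
    have := valP_orb w hcomm (s := t) (t := s) (by omega) hs (by omega)
    omega

lemma bD_eq (w : Equiv.Perm (Fin (2*n)))
    (hcomm : ∀ j, w (sigmaD n j) = sigmaD n (w j)) (s : ℕ) (hs : s < n) :
    bD n w s = BB n (valP w) s := by
  unfold bD BB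
  congr 1
  apply Finset.filter_congr
  intro t ht
  have h := Finset.mem_Ico.mp ht
  have hvt : valP w t < 2*n := valP_lt w (by omega)
  have hvs : valP w s < 2*n := valP_lt w (by omega)
  unfold ltD
  constructor
  · rintro ⟨h1, _⟩
    omega
  · intro h1
    refine ⟨by omega, ?_⟩
    rintro ⟨ha, hb⟩
    have heq : valP w s = valP w t := by omega
    have := valP_inj w (u := s) (v := t) (by omega) (by omega) heq
    omega

end Main

end TypeD

/-- For `w` in the Weyl group of type `D_n` (a permutation of `D_n`
commuting with `σ` with an even number of `s ∈ [n]` such that `w(s) ⪰ n̄`), the length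
of `w` equals `Σ_{s=1}^n (a_s(w) + b_s(w))`. -/
theorem typeD_length_formula (n : ℕ) (hn : 4 ≤ n) (w : Equiv.Perm (Fin (2 * n)))
    (hcomm : ∀ j, w (sigmaD n j) = sigmaD n (w j))
    (heven : Even ((Finset.range n).filter fun s => n ≤ valP w s).card) :
    lenD n w = ∑ s ∈ Finset.range n, (aD n w s + bD n w s) := by
  have hsum_eq : ∑ s ∈ Finset.range n, (aD n w s + bD n w s)
      = TypeD.NN n (valP w) := by
    unfold TypeD.NN
    apply Finset.sum_congr rfl
    intro s hs
    rw [TypeD.aD_eq w hcomm s (Finset.mem_range.mp hs),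
      TypeD.bD_eq w hcomm s (Finset.mem_range.mp hs)]
  have heven' : Even (TypeD.countB n w) := heven
  obtain ⟨l, hl1, hl2, hl3⟩ :=
    TypeD.exists_word hn (TypeD.NN n (valP w)) w hcomm heven' rfl
  set S : Set ℕ := {k | ∃ l : List (Equiv.Perm (Fin (2 * n))),
    l.length = k ∧ (∀ x ∈ l, x ∈ genD n) ∧ l.prod = w} with hS
  have hlen_eq : lenD n w = sInf S := rfl
  have hmemS : TypeD.NN n (valP w) ∈ S := ⟨l, hl3, hl1, hl2⟩
  have hub : sInf S ≤ TypeD.NN n (valP w) := Nat.sInf_le hmemS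
  obtain ⟨l₀, hlen0, hmem0, hprod0⟩ := Nat.sInf_mem (⟨_, hmemS⟩ : S.Nonempty)
  have hlb := (TypeD.word_bound hn l₀ hmem0).2
  rw [hprod0, hlen0] at hlb
  rw [hsum_eq, hlen_eq]
  omega
end

section
/- Let J = [p, q] ⊆ [n] be an interval and define a directed graph on subsets of J with an edge M → N whenever there exists j with j ∈ N, j+1 ∈ M and M ∖ {j+1} = N ∖ {j} (type (M1)). Then for M = {m_1 < ⋯ < m_r} and N = {n_1 < ⋯ < n_s}, there is a directed path from M to N if and only if r = s and m_ν ≥ n_ν for all ν ∈ [r]. -/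
/-- Edge of type (M1) between Maya diagrams (subsets of the interval `J = [p,q]`):
`M → N` if there exists `j` with `j ∈ N`, `j+1 ∈ M` and `M ∖ {j+1} = N ∖ {j}`. -/
def mayaM1 (p q : ℕ) (M N : Finset ℕ) : Prop :=
  M ⊆ Finset.Icc p q ∧ N ⊆ Finset.Icc p q ∧
    ∃ j, j ∈ N ∧ j + 1 ∈ M ∧ M.erase (j + 1) = N.erase j

lemma sort_step (A : Finset ℕ) (j : ℕ) (hj : j ∉ A) (hj1 : j + 1 ∈ A) :
    (insert j (A.erase (j+1))).sort (· ≤ ·) =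
      (A.sort (· ≤ ·)).map (fun x => if x = j + 1 then j else x) := by
  set f : ℕ → ℕ := fun x => if x = j + 1 then j else x with hf
  refine (fun hperm hs => List.Perm.eq_of_sortedLE (Finset.pairwise_sort _ _).sortedLE (List.Pairwise.sortedLE hs) hperm) ?_ ?_
  · rw [← Multiset.coe_eq_coe, Finset.sort_eq, ← Multiset.map_coe, Finset.sort_eq]
    rw [Finset.insert_val_of_notMem (by simp [hj]), Finset.erase_val]
    have h1 : A.val = (j+1) ::ₘ A.val.erase (j+1) := (Multiset.cons_erase (by simpa using hj1)).symm
    conv_rhs => rw [h1]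
    rw [Multiset.map_cons]
    simp only [hf]
    rw [if_pos trivial]
    congr 1
    rw [Multiset.map_congr rfl ?_, Multiset.map_id']
    intro x hx
    have hxA : x ∈ A.erase (j+1) := by rwa [← Finset.erase_val] at hx
    simp [Finset.ne_of_mem_erase hxA]
  · refine List.Pairwise.map f ?_ (List.sortedLT_iff_pairwise.mp (Finset.sortedLT_sort A))
    intro a b hab
    simp only [hf]
    split_ifs <;> omega

lemma mayaM1_struct {p q : ℕ} {M N : Finset ℕ} (h : mayaM1 p q M N) :
    ∃ j, j ∉ M ∧ j + 1 ∈ M ∧ N = insert j (M.erase (j+1)) := by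
  obtain ⟨hM, hN, j, hjN, hj1M, he⟩ := h
  have hjM : j ∉ M := by
    intro hjM
    have : j ∈ M.erase (j+1) := Finset.mem_erase.2 ⟨by omega, hjM⟩
    rw [he] at this
    exact (Finset.notMem_erase j N) this
  refine ⟨j, hjM, hj1M, ?_⟩
  have : N = insert j (N.erase j) := (Finset.insert_erase hjN).symm
  rw [this, he]

lemma step_card {p q : ℕ} {M N : Finset ℕ} (h : mayaM1 p q M N) : N.card = M.card := by
  obtain ⟨j, hjM, hj1M, rfl⟩ := mayaM1_struct h
  rw [Finset.card_insert_of_notMem (fun hc => hjM (Finset.mem_of_mem_erase hc)),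
    Finset.card_erase_of_mem hj1M]
  have : 1 ≤ M.card := Finset.card_pos.2 ⟨_, hj1M⟩
  omega

lemma getD_map_le (l : List ℕ) (f : ℕ → ℕ) (hfle : ∀ x, f x ≤ x) (k : ℕ) :
    (l.map f).getD k 0 ≤ l.getD k 0 := by
  by_cases hk : k < l.length
  · rw [List.getD_eq_getElem _ _ (by simpa using hk), List.getD_eq_getElem _ _ hk,
      List.getElem_map]
    exact hfle _
  · rw [List.getD_eq_default _ _ (by simpa using not_lt.1 hk)]
    exact Nat.zero_le _

lemma step_dom {p q : ℕ} {A B : Finset ℕ} (h : mayaM1 p q A B) (k : ℕ) :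
    (B.sort (· ≤ ·)).getD k 0 ≤ (A.sort (· ≤ ·)).getD k 0 := by
  obtain ⟨j, hj, hj1, rfl⟩ := mayaM1_struct h
  rw [sort_step _ j hj hj1]
  exact getD_map_le _ _ (fun x => by split_ifs <;> omega) k

lemma reach_aux (p q : ℕ) : ∀ s (M N : Finset ℕ), (∑ x ∈ M, x) = s →
    M ⊆ Finset.Icc p q → N ⊆ Finset.Icc p q → M.card = N.card →
    (∀ k < M.card, (N.sort (· ≤ ·)).getD k 0 ≤ (M.sort (· ≤ ·)).getD k 0) →
    Relation.ReflTransGen (mayaM1 p q) M N := by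
  intro s
  induction s using Nat.strong_induction_on with
  | _ s ih =>
  intro M N hs hM hN hcard hdom
  by_cases hMN : M = N
  · subst hMN; exact Relation.ReflTransGen.refl
  set lM := M.sort (· ≤ ·) with hlM
  set lN := N.sort (· ≤ ·) with hlN
  have hlenM : lM.length = M.card := Finset.length_sort _
  have hlenN : lN.length = N.card := Finset.length_sort _
  have hpairM : ∀ i j (_ : i < lM.length) (_ : j < lM.length), i < j → lM[i] < lM[j] :=
    List.pairwise_iff_getElem.mp (List.sortedLT_iff_pairwise.mp (Finset.sortedLT_sort M))
  have hpairN : ∀ i j (_ : i < lN.length) (_ : j < lN.length), i < j → lN[i] < lN[j] :=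
    List.pairwise_iff_getElem.mp (List.sortedLT_iff_pairwise.mp (Finset.sortedLT_sort N))
  have hex : ∃ ν, ν < M.card ∧ lN.getD ν 0 < lM.getD ν 0 := by
    by_contra hno
    push_neg at hno
    apply hMN
    have hll : lM = lN := by
      apply List.ext_getElem (by omega)
      intro k h1 h2
      have e1 : lM.getD k 0 = lM[k] := List.getD_eq_getElem _ _ h1
      have e2 : lN.getD k 0 = lN[k] := List.getD_eq_getElem _ _ h2
      have := hdom k (by omega)
      have := hno k (by omega)
      omega
    have : lM.toFinset = lN.toFinset := by rw [hll]
    rwa [hlM, hlN, Finset.sort_toFinset, Finset.sort_toFinset] at this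
  obtain ⟨ν, ⟨hνcard, hνlt⟩, hνmin⟩ :
      ∃ ν, (ν < M.card ∧ lN.getD ν 0 < lM.getD ν 0) ∧
        ∀ μ < ν, ¬(μ < M.card ∧ lN.getD μ 0 < lM.getD μ 0) := by
    classical
    exact ⟨Nat.find hex, Nat.find_spec hex, fun μ h => Nat.find_min hex h⟩
  have hνlen : ν < lM.length := by omega
  have hνlenN : ν < lN.length := by omega
  have hgM : lM.getD ν 0 = lM[ν] := List.getD_eq_getElem _ _ hνlen
  have hgN : lN.getD ν 0 = lN[ν] := List.getD_eq_getElem _ _ hνlenN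
  set j := lM[ν] - 1 with hjdef
  have hj1 : j + 1 = lM[ν] := by omega
  have hmem : lM[ν] ∈ M := (Finset.mem_sort _).1 (List.getElem_mem _)
  have hnmem : lN[ν] ∈ N := (Finset.mem_sort _).1 (List.getElem_mem _)
  have hnIcc := Finset.mem_Icc.1 (hN hnmem)
  have hmIcc := Finset.mem_Icc.1 (hM hmem)
  have hjM : j ∉ M := by
    intro hjMm
    have hjl : j ∈ lM := (Finset.mem_sort _).2 hjMm
    obtain ⟨μ, hμlen, hμ⟩ := List.getElem_of_mem hjl
    have hμν : μ < ν := by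
      by_contra hc
      push_neg at hc
      rcases eq_or_lt_of_le hc with h | h
      · subst h; omega
      · have := hpairM ν μ hνlen hμlen h; omega
    have hμcard : μ < M.card := by omega
    have h5 : ¬ lN.getD μ 0 < lM.getD μ 0 := fun hb => hνmin μ hμν ⟨hμcard, hb⟩
    have h6 := hdom μ hμcard
    have e1 : lM.getD μ 0 = lM[μ] := List.getD_eq_getElem _ _ hμlen
    have e2 : lN.getD μ 0 = lN[μ] := List.getD_eq_getElem _ _ (by omega)
    have h7 := hpairN μ ν (by omega) hνlenN hμν
    omega
  set M' := insert j (M.erase (j+1)) with hM'def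
  have hjerase : j ∉ M.erase (j+1) := fun hc => hjM (Finset.mem_of_mem_erase hc)
  have hedge : mayaM1 p q M M' := by
    refine ⟨hM, ?_, j, Finset.mem_insert_self _ _, hj1 ▸ hmem, ?_⟩
    · refine Finset.insert_subset (Finset.mem_Icc.2 ⟨by omega, by omega⟩)
        ((Finset.erase_subset _ _).trans hM)
    · rw [hM'def, Finset.erase_insert hjerase]
  have hM'sub : M' ⊆ Finset.Icc p q := hedge.2.1
  have hsort' : M'.sort (· ≤ ·) = lM.map (fun x => if x = j + 1 then j else x) :=
    sort_step M j hjM (hj1 ▸ hmem)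
  have hcard' : M'.card = M.card := step_card hedge
  have hsum' : (∑ x ∈ M', x) + 1 = s := by
    rw [hM'def, Finset.sum_insert hjerase]
    have := Finset.add_sum_erase M id (hj1 ▸ hmem)
    simp only [id] at this
    omega
  have hdom' : ∀ k < M'.card, lN.getD k 0 ≤ ((M'.sort (· ≤ ·))).getD k 0 := by
    intro k hk
    rw [hsort']
    have hklen : k < lM.length := by omega
    have e4 : (List.map (fun x => if x = j + 1 then j else x) lM).getD k 0
        = (List.map (fun x => if x = j + 1 then j else x) lM)[k]'(by simpa using hklen) :=
      List.getD_eq_getElem _ _ _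
    rw [e4, List.getElem_map]
    have e5 : lN.getD k 0 = lN[k] := List.getD_eq_getElem _ _ (by omega)
    by_cases hkj : lM[k] = j + 1
    · have hkν : k = ν := by
        by_contra hc
        rcases lt_or_gt_of_ne hc with h | h
        · have := hpairM k ν hklen hνlen h; omega
        · have := hpairM ν k hνlen hklen h; omega
      subst hkν
      rw [if_pos hkj]
      omega
    · rw [if_neg hkj]
      have h8 := hdom k (by omega)
      have e3 : lM.getD k 0 = lM[k] := List.getD_eq_getElem _ _ hklen
      omega
  exact Relation.ReflTransGen.head hedge
    (ih _ (by omega) M' N rfl hM'sub hN (hcard'.trans hcard) hdom')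

/-- For the directed graph on subsets of the interval `J = [p,q] ⊆ [n]`
with only edges of type (M1), and `M = {m_1 < ⋯ < m_r}`, `N = {n_1 < ⋯ < n_s}`, there is a
directed path from `M` to `N` if and only if `r = s` and `m_ν ≥ n_ν` for all `ν ∈ [r]`. -/
theorem maya_reachability_typeC (n p q : ℕ) (hp : 1 ≤ p) (hq : q ≤ n)
    (M N : Finset ℕ) (hM : M ⊆ Finset.Icc p q) (hN : N ⊆ Finset.Icc p q) :
    Relation.ReflTransGen (mayaM1 p q) M N ↔
      (M.card = N.card ∧
        ∀ k < M.card, (N.sort (· ≤ ·)).getD k 0 ≤ (M.sort (· ≤ ·)).getD k 0) := by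
  constructor
  · intro h
    clear hN
    induction h with
    | refl => exact ⟨rfl, fun k _ => le_refl _⟩
    | tail hab hbc ih =>
      exact ⟨ih.1.trans (step_card hbc).symm,
        fun k hk => (step_dom hbc k).trans (ih.2 k hk)⟩
  · rintro ⟨h1, h2⟩
    exact reach_aux p q _ M N rfl hM hN h1 h2
end

section
/- Let J = [p, q] ⊆ [n] be an interval with n ∈ J, and define a directed graph on subsets of J with edges of type (M1) (there exists j with j ∈ N, j+1 ∈ M, M∖{j+1} = N∖{j}) and type (M2) (n ∈ N and M = N ∖ {n}). Then for M = {m_1 < ⋯ < m_r} and N = {n_1 < ⋯ < n_s}, there is a directed path from M to N if and only if r ≤ s and m_ν ≥ n_ν for all ν ∈ [r]. -/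
/-- Edge of type (M2) (type `B_n`, `n ∈ J = [p,n]`): `M → N` if `n ∈ N` and `M = N ∖ {n}`. -/
def mayaM2 (p n : ℕ) (M N : Finset ℕ) : Prop :=
  M ⊆ Finset.Icc p n ∧ N ⊆ Finset.Icc p n ∧ n ∈ N ∧ M = N.erase n


section MayaAux
open Finset


def cnt (S : Finset ℕ) (t : ℕ) : ℕ := (S.filter (· ≤ t)).card

lemma cnt_mono (S : Finset ℕ) {a b : ℕ} (h : a ≤ b) : cnt S a ≤ cnt S b := by
  apply Finset.card_le_card
  intro x hx
  simp only [mem_filter] at *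
  exact ⟨hx.1, hx.2.trans h⟩

lemma cnt_stable {p n : ℕ} {S : Finset ℕ} (hS : S ⊆ Finset.Icc p n) {t : ℕ} (ht : n ≤ t) :
    cnt S t = S.card := by
  unfold cnt
  congr 1
  apply Finset.filter_true_of_mem
  intro x hx
  exact le_trans (Finset.mem_Icc.mp (hS hx)).2 ht

lemma cnt_succ (S : Finset ℕ) (t : ℕ) :
    cnt S (t + 1) = cnt S t + (if t + 1 ∈ S then 1 else 0) := by
  unfold cnt
  rw [Finset.card_filter, Finset.card_filter]
  have : ∀ x ∈ S, (if x ≤ t + 1 then 1 else 0) = (if x ≤ t then 1 else 0) + (if x = t+1 then 1 else 0) := by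
    intro x _; split_ifs <;> omega
  rw [Finset.sum_congr rfl this, Finset.sum_add_distrib]
  congr 1
  rw [← Finset.card_filter]
  split_ifs with h
  · rw [Finset.filter_eq', if_pos h]; simp
  · rw [Finset.filter_eq', if_neg h]; simp

lemma cnt_congr {S : Finset ℕ} {a b : ℕ} (hab : a ≤ b) (h : ∀ x ∈ S, x ≤ b → x ≤ a) :
    cnt S b = cnt S a := by
  unfold cnt
  congr 1
  ext x
  simp only [mem_filter]
  exact ⟨fun hx => ⟨hx.1, h x hx.1 hx.2⟩, fun hx => ⟨hx.1, hx.2.trans hab⟩⟩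

lemma cnt_ext {p n : ℕ} (hp : 1 ≤ p) {M N : Finset ℕ} (hM : M ⊆ Finset.Icc p n)
    (hN : N ⊆ Finset.Icc p n) (h : ∀ t, cnt M t = cnt N t) : M = N := by
  ext x
  match x with
  | 0 =>
    constructor <;> intro hx
    · exact absurd (Finset.mem_Icc.mp (hM hx)).1 (by omega)
    · exact absurd (Finset.mem_Icc.mp (hN hx)).1 (by omega)
  | (k+1) =>
    have h1 := cnt_succ M k
    have h2 := cnt_succ N k
    have e1 := h k; have e2 := h (k+1)
    constructor <;> intro hx <;> by_contra hc
    · rw [if_pos hx] at h1; rw [if_neg hc] at h2; omega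
    · rw [if_neg hc] at h1; rw [if_pos hx] at h2; omega



lemma lowerset_eq_range (A : Finset ℕ) (h : ∀ k k' : ℕ, k' ≤ k → k ∈ A → k' ∈ A) :
    A = Finset.range A.card := by
  have hsub : Finset.range A.card ⊆ A := by
    intro k hk
    rw [Finset.mem_range] at hk
    by_contra hc
    have : A ⊆ Finset.range k := by
      intro a ha
      rw [Finset.mem_range]
      by_contra hak
      exact hc (h a k (by omega) ha)
    have := Finset.card_le_card this
    simp [Finset.card_range] at this
    omega
  exact (Finset.eq_of_subset_of_card_le hsub (by simp)).symm

lemma cnt_eq_range_filter (S : Finset ℕ) (t : ℕ) :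
    cnt S t = ((Finset.range S.card).filter
      (fun k => (S.sort (· ≤ ·)).getD k 0 ≤ t)).card := by
  classical
  set l := S.sort (· ≤ ·) with hl
  have hlen : l.length = S.card := Finset.length_sort _
  have hget : ∀ (k : ℕ) (hk : k < l.length), l.getD k 0 = l.get ⟨k, hk⟩ :=
    fun k hk => List.getD_eq_get l 0 ⟨k, hk⟩
  symm
  apply Finset.card_bij (fun k _ => l.getD k 0)
  · intro k hk
    simp only [Finset.mem_filter, Finset.mem_range] at hk
    rw [Finset.mem_filter]
    refine ⟨?_, hk.2⟩
    rw [← Finset.mem_sort (α := ℕ) (· ≤ ·), ← hl, hget k (by omega)]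
    exact l.get_mem _
  · intro a ha b hb hab
    simp only [Finset.mem_filter, Finset.mem_range] at ha hb
    rw [hget a (by omega), hget b (by omega)] at hab
    have := (Finset.sortedLT_sort S).strictMono_get.injective hab
    simpa using congrArg Fin.val this
  · intro b hb
    rw [Finset.mem_filter] at hb
    have hbl : b ∈ l := (Finset.mem_sort (α := ℕ) (· ≤ ·)).mpr hb.1
    obtain ⟨k, hk⟩ := List.mem_iff_get.mp hbl
    have hgd : l.getD (k : ℕ) 0 = b := by rw [hget k k.2]; exact hk
    refine ⟨k, ?_, hgd⟩
    rw [Finset.mem_filter, Finset.mem_range]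
    exact ⟨by omega, hgd ▸ hb.2⟩

lemma getD_mono (S : Finset ℕ) {k k' : ℕ} (h : k' ≤ k) (hk : k < S.card) :
    (S.sort (· ≤ ·)).getD k' 0 ≤ (S.sort (· ≤ ·)).getD k 0 := by
  set l := S.sort (· ≤ ·)
  have hlen : l.length = S.card := Finset.length_sort _
  rw [show l.getD k' 0 = l.get ⟨k', by omega⟩ from List.getD_eq_get l 0 ⟨k', by omega⟩,
    show l.getD k 0 = l.get ⟨k, by omega⟩ from List.getD_eq_get l 0 ⟨k, by omega⟩]
  rcases eq_or_lt_of_le h with rfl | hlt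
  · exact le_refl _
  · exact le_of_lt ((Finset.sortedLT_sort S).strictMono_get (by exact hlt))

/-- key: `k < cnt S t ↔ k < S.card ∧ sort S k ≤ t` -/
lemma lt_cnt_iff (S : Finset ℕ) (t k : ℕ) :
    k < cnt S t ↔ k < S.card ∧ (S.sort (· ≤ ·)).getD k 0 ≤ t := by
  classical
  set A := (Finset.range S.card).filter (fun k => (S.sort (· ≤ ·)).getD k 0 ≤ t) with hA
  have hmem : ∀ a : ℕ, a ∈ A ↔ a < S.card ∧ (S.sort (· ≤ ·)).getD a 0 ≤ t := by
    intro a; rw [hA, Finset.mem_filter, Finset.mem_range]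
  have hlow : ∀ a a' : ℕ, a' ≤ a → a ∈ A → a' ∈ A := by
    intro a a' haa ha
    rw [hmem] at *
    exact ⟨by omega, le_trans (getD_mono S haa ha.1) ha.2⟩
  have hrange := lowerset_eq_range A hlow
  have : cnt S t = A.card := cnt_eq_range_filter S t
  rw [this, ← Finset.mem_range, ← hrange, hmem]

lemma cnt_zero {p n : ℕ} (hp : 1 ≤ p) {S : Finset ℕ} (hS : S ⊆ Finset.Icc p n) :
    cnt S 0 = 0 := by
  unfold cnt
  rw [Finset.card_eq_zero, Finset.filter_eq_empty_iff]
  intro x hx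
  have := (Finset.mem_Icc.mp (hS hx)).1
  omega

lemma cnt_insert (S : Finset ℕ) {a : ℕ} (ha : a ∉ S) (t : ℕ) :
    cnt (insert a S) t = (if a ≤ t then 1 else 0) + cnt S t := by
  unfold cnt
  rw [Finset.card_filter, Finset.sum_insert ha, ← Finset.card_filter]

lemma cnt_erase (S : Finset ℕ) {a : ℕ} (ha : a ∈ S) (t : ℕ) :
    cnt S t = (if a ≤ t then 1 else 0) + cnt (S.erase a) t := by
  unfold cnt
  rw [Finset.card_filter, ← Finset.add_sum_erase _ _ ha, ← Finset.card_filter]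







/-- Lemma A: the sorted-getD dominance condition is equivalent to the counting condition. -/
lemma condA_iff {p n : ℕ} {M N : Finset ℕ} (hM : M ⊆ Finset.Icc p n)
    (hN : N ⊆ Finset.Icc p n) :
    (M.card ≤ N.card ∧
        ∀ k < M.card, (N.sort (· ≤ ·)).getD k 0 ≤ (M.sort (· ≤ ·)).getD k 0)
      ↔ ∀ t, cnt M t ≤ cnt N t := by
  constructor
  · rintro ⟨h1, h2⟩ t
    rcases Nat.eq_zero_or_pos (cnt M t) with h0 | h0
    · omega
    have hltM : cnt M t - 1 < cnt M t := by omega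
    obtain ⟨hk, hle⟩ := (lt_cnt_iff M t (cnt M t - 1)).mp hltM
    have : cnt M t - 1 < cnt N t := by
      rw [lt_cnt_iff]
      exact ⟨lt_of_lt_of_le hk h1, le_trans (h2 _ hk) hle⟩
    omega
  · intro h
    constructor
    · have := h n
      rwa [cnt_stable hM le_rfl, cnt_stable hN le_rfl] at this
    · intro k hk
      have h1 : k < cnt M ((M.sort (· ≤ ·)).getD k 0) :=
        (lt_cnt_iff M _ k).mpr ⟨hk, le_rfl⟩
      have h2 := lt_of_lt_of_le h1 (h _)
      exact ((lt_cnt_iff N _ k).mp h2).2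

lemma cnt_edge {p n : ℕ} {M N : Finset ℕ}
    (h : mayaM1 p n M N ∨ mayaM2 p n M N) (t : ℕ) : cnt M t ≤ cnt N t := by
  rcases h with ⟨hM, hN, j, hjN, hjM, he⟩ | ⟨hM, hN, hnN, he⟩
  · have hNeq : N = insert j (M.erase (j + 1)) := by
      rw [he]; exact (Finset.insert_erase hjN).symm
    have hj : j ∉ M.erase (j + 1) := he ▸ Finset.notMem_erase j N
    have e1 : cnt N t = (if j ≤ t then 1 else 0) + cnt (M.erase (j + 1)) t := by
      rw [hNeq, cnt_insert _ hj]
    have e2 : cnt M t = (if j + 1 ≤ t then 1 else 0) + cnt (M.erase (j + 1)) t :=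
      cnt_erase M hjM t
    split_ifs at e1 e2 <;> omega
  · have e1 : cnt N t = (if n ≤ t then 1 else 0) + cnt M t := by
      conv_lhs => rw [cnt_erase N hnN t, ← he]
    split_ifs at e1 <;> omega

lemma rtg_inv {p n : ℕ} {M N : Finset ℕ}
    (h : Relation.ReflTransGen (fun M N => mayaM1 p n M N ∨ mayaM2 p n M N) M N) :
    ∀ t, cnt M t ≤ cnt N t := by
  induction h with
  | refl => exact fun t => le_rfl
  | tail _ hbc ih => exact fun t => le_trans (ih t) (cnt_edge hbc t)

lemma maya_step {p n : ℕ} (hp : 1 ≤ p) (hpn : p ≤ n) {M N : Finset ℕ}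
    (hM : M ⊆ Finset.Icc p n) (hN : N ⊆ Finset.Icc p n) (hMN : M ≠ N)
    (hInv : ∀ t, cnt M t ≤ cnt N t) :
    ∃ M', (mayaM1 p n M M' ∨ mayaM2 p n M M') ∧ M' ⊆ Finset.Icc p n ∧
      (∀ t, cnt M' t ≤ cnt N t) ∧
      (∑ t ∈ Finset.range (n + 1), (cnt N t - cnt M' t)) <
        (∑ t ∈ Finset.range (n + 1), (cnt N t - cnt M t)) := by
  classical
  -- there is some t with cnt M t < cnt N t
  have hex : ∃ t, cnt M t < cnt N t := by
    by_contra hc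
    push_neg at hc
    exact hMN (cnt_ext hp hM hN (fun t => le_antisymm (hInv t) (hc t)))
  obtain ⟨j0, hj0, hj0min'⟩ : ∃ j0, cnt M j0 < cnt N j0 ∧ ∀ t < j0, ¬(cnt M t < cnt N t) :=
    ⟨Nat.find hex, Nat.find_spec hex, fun t ht => Nat.find_min hex ht⟩
  have hj0min : ∀ t < j0, cnt M t = cnt N t := fun t ht =>
    le_antisymm (hInv t) (not_lt.mp (hj0min' t ht))
  have hj0pos : 1 ≤ j0 := by
    rcases Nat.eq_zero_or_pos j0 with h0 | h0
    · rw [h0, cnt_zero hp hM, cnt_zero hp hN] at hj0; omega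
    · omega
  have hsucc : j0 = (j0 - 1) + 1 := by omega
  have hMsucc := cnt_succ M (j0 - 1)
  have hNsucc := cnt_succ N (j0 - 1)
  rw [← hsucc] at hMsucc hNsucc
  have heqprev : cnt M (j0 - 1) = cnt N (j0 - 1) := hj0min _ (by omega)
  have hj0M : j0 ∉ M := by
    intro hmem
    rw [if_pos hmem] at hMsucc
    split_ifs at hNsucc <;> omega
  have hj0N : j0 ∈ N := by
    by_contra hmem
    rw [if_neg hmem] at hNsucc
    split_ifs at hMsucc <;> omega
  have hj0Icc := Finset.mem_Icc.mp (hN hj0N)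
  by_cases hadd : n ∉ M ∧ cnt M n < cnt N n
  · -- add the element n
    refine ⟨insert n M, Or.inr ⟨hM, ?_, Finset.mem_insert_self n M,
      (Finset.erase_insert hadd.1).symm⟩, ?_, ?_, ?_⟩
    · exact Finset.insert_subset (Finset.mem_Icc.mpr ⟨hpn, le_rfl⟩) hM
    · exact Finset.insert_subset (Finset.mem_Icc.mpr ⟨hpn, le_rfl⟩) hM
    · intro t
      rw [cnt_insert M hadd.1]
      split_ifs with h
      · have e1 := cnt_stable hM h
        have e2 := cnt_stable hN h
        have e3 := cnt_stable hM (le_refl n)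
        have e4 := cnt_stable hN (le_refl n)
        omega
      · have := hInv t; omega
    · apply Finset.sum_lt_sum
      · intro t _
        have := cnt_insert M hadd.1 t
        have := hInv t
        split_ifs at * <;> omega
      · refine ⟨n, Finset.self_mem_range_succ n, ?_⟩
        have := cnt_insert M hadd.1 n
        rw [if_pos le_rfl] at this
        have h2 := hadd.2
        omega
  · -- decrease move
    have hex2 : ∃ x, x ∈ M ∧ j0 < x ∧ x ≤ n := by
      rcases not_and_or.mp hadd with h | h
      · push_neg at h
        have : j0 ≠ n := fun he => hj0M (he ▸ h)
        exact ⟨n, h, by omega, le_rfl⟩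
      · push_neg at h
        by_contra hc
        push_neg at hc
        have : cnt M n = cnt M j0 := by
          apply cnt_congr hj0Icc.2
          intro x hx hxn
          by_contra hxc
          exact absurd hxn (by have := hc x hx (by omega); omega)
        have := cnt_mono N hj0Icc.2
        omega
    obtain ⟨m, ⟨hmM, hj0m, hmn⟩, hmmin⟩ :
        ∃ m, (m ∈ M ∧ j0 < m ∧ m ≤ n) ∧ ∀ x < m, ¬(x ∈ M ∧ j0 < x ∧ x ≤ n) :=
      ⟨Nat.find hex2, Nat.find_spec hex2, fun x hx => Nat.find_min hex2 hx⟩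
    set j := m - 1 with hjdef
    have hjm : j + 1 = m := by omega
    have hjM : j ∉ M := by
      intro hmem
      rcases Nat.lt_or_ge j0 j with h | h
      · exact hmmin j (by omega) ⟨hmem, h, by omega⟩
      · have : j = j0 := by omega
        exact hj0M (this ▸ hmem)
    have hcntjj0 : cnt M j = cnt M j0 := by
      apply cnt_congr (by omega)
      intro x hx hxj
      by_contra hxc
      exact hmmin x (by omega) ⟨hx, by omega, by omega⟩
    have hcntj : cnt M j < cnt N j :=
      lt_of_lt_of_le (hcntjj0 ▸ hj0) (cnt_mono N (by omega))
    have hjer : j ∉ M.erase m := fun h => hjM (Finset.mem_of_mem_erase h)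
    refine ⟨insert j (M.erase m), Or.inl ⟨hM, ?_, j, Finset.mem_insert_self j _,
      hjm ▸ hmM, ?_⟩, ?_, ?_, ?_⟩
    · refine Finset.insert_subset (Finset.mem_Icc.mpr ⟨by omega, by omega⟩)
        ((Finset.erase_subset _ _).trans hM)
    · rw [hjm, Finset.erase_insert hjer]
    · refine Finset.insert_subset (Finset.mem_Icc.mpr ⟨by omega, by omega⟩)
        ((Finset.erase_subset _ _).trans hM)
    · intro t
      have e1 := cnt_insert (M.erase m) hjer t
      have e2 := cnt_erase M hmM t
      have e3 := hInv t
      rcases Nat.lt_or_ge t j with h | h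
      · rw [if_neg (by omega)] at e1
        rw [if_neg (by omega)] at e2
        omega
      rcases Nat.lt_or_ge t m with h' | h'
      · have : t = j := by omega
        subst this
        rw [if_pos le_rfl] at e1
        rw [if_neg (by omega)] at e2
        omega
      · rw [if_pos (by omega)] at e1
        rw [if_pos h'] at e2
        omega
    · apply Finset.sum_lt_sum
      · intro t _
        have e1 := cnt_insert (M.erase m) hjer t
        have e2 := cnt_erase M hmM t
        split_ifs at e1 e2 <;> omega
      · refine ⟨j, Finset.mem_range.mpr (by omega), ?_⟩
        have e1 := cnt_insert (M.erase m) hjer j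
        have e2 := cnt_erase M hmM j
        rw [if_pos le_rfl] at e1
        rw [if_neg (by omega)] at e2
        omega

lemma maya_reach {p n : ℕ} (hp : 1 ≤ p) (hpn : p ≤ n) :
    ∀ (D : ℕ) (M N : Finset ℕ), M ⊆ Finset.Icc p n → N ⊆ Finset.Icc p n →
      (∀ t, cnt M t ≤ cnt N t) →
      (∑ t ∈ Finset.range (n + 1), (cnt N t - cnt M t)) ≤ D →
      Relation.ReflTransGen (fun M N => mayaM1 p n M N ∨ mayaM2 p n M N) M N := by
  intro D
  induction D with
  | zero =>
    intro M N hM hN hInv hD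
    by_cases hMN : M = N
    · exact hMN ▸ Relation.ReflTransGen.refl
    · obtain ⟨M', _, _, _, hlt⟩ := maya_step hp hpn hM hN hMN hInv
      omega
  | succ D ih =>
    intro M N hM hN hInv hD
    by_cases hMN : M = N
    · exact hMN ▸ Relation.ReflTransGen.refl
    · obtain ⟨M', hedge, hM', hInv', hlt⟩ := maya_step hp hpn hM hN hMN hInv
      exact Relation.ReflTransGen.head hedge (ih M' N hM' hN hInv' (by omega))

end MayaAux

/-- For the directed graph on subsets of the interval `J = [p,n] ⊆ [n]`
(with `n ∈ J`) with edges of types (M1) and (M2), and `M = {m_1 < ⋯ < m_r}`,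
`N = {n_1 < ⋯ < n_s}`, there is a directed path from `M` to `N` if and only if
`r ≤ s` and `m_ν ≥ n_ν` for all `ν ∈ [r]`. -/
theorem maya_reachability_typeB (n p : ℕ) (hp : 1 ≤ p) (hpn : p ≤ n)
    (M N : Finset ℕ) (hM : M ⊆ Finset.Icc p n) (hN : N ⊆ Finset.Icc p n) :
    Relation.ReflTransGen (fun M N => mayaM1 p n M N ∨ mayaM2 p n M N) M N ↔
      (M.card ≤ N.card ∧
        ∀ k < M.card, (N.sort (· ≤ ·)).getD k 0 ≤ (M.sort (· ≤ ·)).getD k 0) := by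
  constructor
  · intro h
    exact (condA_iff hM hN).mpr (rtg_inv h)
  · intro h
    exact maya_reach hp hpn _ M N hM hN ((condA_iff hM hN).mp h)
      (le_refl _)
end

section
/- Let J = [p, q] ⊆ [n] be an interval with n−1, n ∈ J, and define a directed graph on subsets of J with edges of type (M1) (there exists j with j ∈ N, j+1 ∈ M, M∖{j+1} = N∖{j}) and type (M3) (n−1, n ∈ N and M = N ∖ {n−1, n}). Then for M = {m_1 < ⋯ < m_r} and N = {n_1 < ⋯ < n_s}, there is a directed path from M to N if and only if s − r is a nonnegative even integer and m_ν ≥ n_ν for all ν ∈ [r]. -/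
/-- Edge of type (M3) (type `D_n`, `n−1, n ∈ J = [p,n]`):
`M → N` if `n−1, n ∈ N` and `M = N ∖ {n−1, n}`. -/
def mayaM3 (p n : ℕ) (M N : Finset ℕ) : Prop :=
  M ⊆ Finset.Icc p n ∧ N ⊆ Finset.Icc p n ∧
    n - 1 ∈ N ∧ n ∈ N ∧ M = (N.erase (n - 1)).erase n



/-- Counting function: number of elements of `A` that are `≤ t`. -/
def fcnt (A : Finset ℕ) (t : ℕ) : ℕ := (A.filter (· ≤ t)).card

lemma fcnt_le_card (A : Finset ℕ) (t : ℕ) : fcnt A t ≤ A.card :=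
  Finset.card_filter_le _ _

lemma fcnt_mono (A : Finset ℕ) {t t' : ℕ} (h : t ≤ t') : fcnt A t ≤ fcnt A t' := by
  apply Finset.card_le_card
  intro x hx
  simp only [Finset.mem_filter] at *
  exact ⟨hx.1, le_trans hx.2 h⟩

lemma fcnt_subset {A B : Finset ℕ} (h : A ⊆ B) (t : ℕ) : fcnt A t ≤ fcnt B t := by
  apply Finset.card_le_card
  intro x hx
  simp only [Finset.mem_filter] at *
  exact ⟨h hx.1, hx.2⟩

lemma fcnt_insert {A : Finset ℕ} {x : ℕ} (hx : x ∉ A) (t : ℕ) :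
    fcnt (insert x A) t = fcnt A t + (if x ≤ t then 1 else 0) := by
  unfold fcnt
  rw [Finset.filter_insert]
  by_cases h : x ≤ t
  · rw [if_pos h, if_pos h,
      Finset.card_insert_of_notMem (fun hc => hx (Finset.mem_filter.mp hc).1)]
  · rw [if_neg h, if_neg h, add_zero]

lemma fcnt_erase {A : Finset ℕ} {x : ℕ} (hx : x ∈ A) (t : ℕ) :
    fcnt A t = fcnt (A.erase x) t + (if x ≤ t then 1 else 0) := by
  conv_lhs => rw [← Finset.insert_erase hx]
  rw [fcnt_insert (Finset.notMem_erase x A) t]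

lemma fcnt_pred (A : Finset ℕ) {t : ℕ} (ht : 1 ≤ t) :
    fcnt A t = fcnt A (t - 1) + (if t ∈ A then 1 else 0) := by
  unfold fcnt
  by_cases h : t ∈ A
  · rw [if_pos h]
    have heq : A.filter (· ≤ t) = insert t (A.filter (· ≤ t - 1)) := by
      ext x
      simp only [Finset.mem_filter, Finset.mem_insert]
      constructor
      · rintro ⟨hx, hxt⟩
        by_cases hxt' : x = t
        · exact Or.inl hxt'
        · exact Or.inr ⟨hx, by omega⟩
      · rintro (rfl | ⟨hx, hxt⟩)
        · exact ⟨h, le_rfl⟩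
        · exact ⟨hx, by omega⟩
    rw [heq, Finset.card_insert_of_notMem (by
      simp only [Finset.mem_filter]
      rintro ⟨-, h'⟩
      omega)]
  · rw [if_neg h, add_zero]
    congr 1
    ext x
    simp only [Finset.mem_filter]
    constructor
    · rintro ⟨hx, hxt⟩
      refine ⟨hx, ?_⟩
      rcases eq_or_lt_of_le hxt with rfl | h'
      · exact absurd hx h
      · omega
    · rintro ⟨hx, hxt⟩
      exact ⟨hx, by omega⟩

lemma fcnt_zero_of_subset {p n : ℕ} (hp : 1 ≤ p) {A : Finset ℕ} (hA : A ⊆ Finset.Icc p n) :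
    fcnt A 0 = 0 := by
  unfold fcnt
  rw [Finset.card_eq_zero, Finset.filter_eq_empty_iff]
  intro x hx
  have := (Finset.mem_Icc.mp (hA hx)).1
  omega

lemma eq_of_fcnt_eq {p n : ℕ} (hp : 1 ≤ p) {M N : Finset ℕ} (hM : M ⊆ Finset.Icc p n)
    (hN : N ⊆ Finset.Icc p n) (h : ∀ t, fcnt M t = fcnt N t) : M = N := by
  ext x
  rcases Nat.eq_zero_or_pos x with rfl | hx
  · constructor
    · intro hmem
      have := (Finset.mem_Icc.mp (hM hmem)).1
      omega
    · intro hmem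
      have := (Finset.mem_Icc.mp (hN hmem)).1
      omega
  · have h1 := fcnt_pred M hx
    have h2 := fcnt_pred N hx
    have h3 := h x
    have h4 := h (x - 1)
    by_cases hMx : x ∈ M <;> by_cases hNx : x ∈ N <;>
      simp only [hMx, hNx, if_pos, if_neg, if_true, if_false, not_false_iff] at h1 h2 <;>
      first
        | exact iff_of_true hMx hNx
        | exact iff_of_false hMx hNx
        | omega

lemma sorted_getD_le_iff : ∀ (l : List ℕ), l.Pairwise (· ≤ ·) → ∀ k, k < l.length → ∀ t,
    (l.getD k 0 ≤ t ↔ k < (l.filter (fun x => x ≤ t)).length)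
  | [], _, k, hk, t => by simp at hk
  | a :: l, hl, 0, hk, t => by
    rw [List.pairwise_cons] at hl
    simp only [List.getD_cons_zero]
    constructor
    · intro h
      rw [List.filter_cons_of_pos (by simpa using h)]
      simp
    · intro h
      by_contra hat
      push_neg at hat
      have hnil : l.filter (fun x => x ≤ t) = [] := by
        rw [List.filter_eq_nil_iff]
        intro x hx
        simp only [decide_eq_true_eq]
        intro hxt
        exact absurd (le_trans (hl.1 x hx) hxt) (by omega)
      rw [List.filter_cons_of_neg (by simpa using hat), hnil] at h
      simp at h
  | a :: l, hl, (k+1), hk, t => by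
    rw [List.pairwise_cons] at hl
    have hk' : k < l.length := by simpa using hk
    simp only [List.getD_cons_succ]
    by_cases hat : a ≤ t
    · rw [List.filter_cons_of_pos (by simpa using hat)]
      simp only [List.length_cons]
      rw [sorted_getD_le_iff l hl.2 k hk' t]
      omega
    · have hgl : l.getD k 0 ∈ l := by
        rw [List.getD_eq_getElem l 0 hk']
        exact List.getElem_mem hk'
      have h1 : ¬ l.getD k 0 ≤ t := fun h => hat (le_trans (hl.1 _ hgl) h)
      have hnil : l.filter (fun x => x ≤ t) = [] := by
        rw [List.filter_eq_nil_iff]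
        intro x hx
        simp only [decide_eq_true_eq]
        intro hxt
        exact hat (le_trans (hl.1 x hx) hxt)
      rw [List.filter_cons_of_neg (by simpa using hat), hnil]
      simp only [List.length_nil]
      constructor
      · intro h
        exact absurd h h1
      · omega

lemma fcnt_eq_length_filter (A : Finset ℕ) (t : ℕ) :
    fcnt A t = ((A.sort (· ≤ ·)).filter (fun x => x ≤ t)).length := by
  have hperm : (A.sort (· ≤ ·)).Perm A.toList := Finset.sort_perm_toList A _
  have h2 : ((A.sort (· ≤ ·)).filter (fun x => x ≤ t)).length
      = (A.toList.filter (fun x => x ≤ t)).length := (hperm.filter _).length_eq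
  rw [h2]
  unfold fcnt
  have h3 : (A.filter (· ≤ t)).val = Multiset.filter (· ≤ t) A.val := Finset.filter_val _ _
  have h4 : (A.val : Multiset ℕ) = ↑A.toList := (Multiset.coe_toList A.val).symm
  rw [Finset.card, h3, h4, Multiset.filter_coe, Multiset.coe_card]

lemma getD_le_iff (A : Finset ℕ) (k t : ℕ) (hk : k < A.card) :
    ((A.sort (· ≤ ·)).getD k 0 ≤ t ↔ k < fcnt A t) := by
  rw [fcnt_eq_length_filter]
  exact sorted_getD_le_iff _ (Finset.pairwise_sort _ _) k (by rw [Finset.length_sort]; exact hk) t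

lemma dom_iff (M N : Finset ℕ) (hle : M.card ≤ N.card) :
    (∀ k < M.card, (N.sort (· ≤ ·)).getD k 0 ≤ (M.sort (· ≤ ·)).getD k 0) ↔
      ∀ t, fcnt M t ≤ fcnt N t := by
  constructor
  · intro h t
    rcases Nat.eq_zero_or_pos (fcnt M t) with h0 | h0
    · omega
    · have hk : fcnt M t - 1 < M.card := by
        have := fcnt_le_card M t
        omega
      have h1 : (M.sort (· ≤ ·)).getD (fcnt M t - 1) 0 ≤ t :=
        (getD_le_iff M _ t hk).mpr (by omega)
      have h3 : (N.sort (· ≤ ·)).getD (fcnt M t - 1) 0 ≤ t := le_trans (h _ hk) h1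
      have := (getD_le_iff N _ t (lt_of_lt_of_le hk hle)).mp h3
      omega
  · intro h k hk
    have h2 := (getD_le_iff M k _ hk).mp le_rfl
    exact (getD_le_iff N k _ (lt_of_lt_of_le hk hle)).mpr (lt_of_lt_of_le h2 (h _))
lemma m1_facts {p n : ℕ} {M N : Finset ℕ} (h : mayaM1 p n M N) :
    N.card = M.card ∧ ∀ t, fcnt M t ≤ fcnt N t := by
  obtain ⟨hM, hN, j, hjN, hjM, hje⟩ := h
  constructor
  · have h1 := Finset.card_erase_of_mem hjM
    have h2 := Finset.card_erase_of_mem hjN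
    have h3 : 0 < M.card := Finset.card_pos.mpr ⟨_, hjM⟩
    have h4 : 0 < N.card := Finset.card_pos.mpr ⟨_, hjN⟩
    rw [hje] at h1
    omega
  · intro t
    rw [fcnt_erase hjM t, fcnt_erase hjN t, hje]
    have : (if j + 1 ≤ t then 1 else 0) ≤ (if j ≤ t then 1 else 0) := by
      split_ifs <;> omega
    omega

lemma m3_facts {p n : ℕ} (hp : 1 ≤ p) {M N : Finset ℕ} (h : mayaM3 p n M N) :
    N.card = M.card + 2 ∧ ∀ t, fcnt M t ≤ fcnt N t := by
  obtain ⟨hM, hN, h1, h2, hMe⟩ := h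
  have hn : 1 ≤ n := by
    have := (Finset.mem_Icc.mp (hN h2)).1
    omega
  have e1 : n ∈ N.erase (n - 1) := Finset.mem_erase.mpr ⟨by omega, h2⟩
  constructor
  · rw [hMe, Finset.card_erase_of_mem e1, Finset.card_erase_of_mem h1]
    have h5 : 0 < (N.erase (n - 1)).card := Finset.card_pos.mpr ⟨_, e1⟩
    have h6 : 0 < N.card := Finset.card_pos.mpr ⟨_, h2⟩
    have h7 := Finset.card_erase_of_mem h1
    omega
  · intro t
    rw [hMe]
    exact fcnt_subset (subset_trans (Finset.erase_subset _ _) (Finset.erase_subset _ _)) t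

lemma step_one (n p : ℕ) (hp : 1 ≤ p) (A : Finset ℕ) (a : ℕ) (hA : A ⊆ Finset.Icc p n)
    (ha : a ∈ A) (ha1 : a - 1 ∉ A) (hpa : p ≤ a - 1) :
    mayaM1 p n A (insert (a - 1) (A.erase a)) := by
  have ha2 : 2 ≤ a := by omega
  have han : a ≤ n := (Finset.mem_Icc.mp (hA ha)).2
  refine ⟨hA, ?_, a - 1, Finset.mem_insert_self _ _, ?_, ?_⟩
  · intro x hx
    rcases Finset.mem_insert.mp hx with rfl | hx
    · exact Finset.mem_Icc.mpr ⟨hpa, by omega⟩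
    · exact hA (Finset.mem_of_mem_erase hx)
  · rw [show a - 1 + 1 = a from by omega]
    exact ha
  · rw [show a - 1 + 1 = a from by omega,
      Finset.erase_insert (fun h => ha1 (Finset.mem_of_mem_erase h))]

lemma step_down (n p : ℕ) (hp : 1 ≤ p) :
    ∀ (d : ℕ) (A : Finset ℕ) (a b : ℕ), A ⊆ Finset.Icc p n → a ∈ A → p ≤ b → a = b + d →
      (∀ c, b ≤ c → c < a → c ∉ A) →
      Relation.ReflTransGen (fun M N => mayaM1 p n M N ∨ mayaM3 p n M N) A
        (insert b (A.erase a)) := by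
  intro d
  induction d with
  | zero =>
    intro A a b hA ha hpb hab hc
    have : a = b := by omega
    subst this
    rw [Finset.insert_erase ha]
  | succ d ih =>
    intro A a b hA ha hpb hab hc
    have ha1 : a - 1 ∉ A := hc (a - 1) (by omega) (by omega)
    have hedge := step_one n p hp A a hA ha ha1 (by omega)
    have haIcc := Finset.mem_Icc.mp (hA ha)
    set A' := insert (a - 1) (A.erase a) with hA'def
    have hstep : Relation.ReflTransGen (fun M N => mayaM1 p n M N ∨ mayaM3 p n M N) A'
        (insert b (A'.erase (a - 1))) := by
      apply ih A' (a - 1) b ?_ (Finset.mem_insert_self _ _) hpb (by omega)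
      · intro c hbc hca hcA'
        rcases Finset.mem_insert.mp hcA' with rfl | h
        · omega
        · exact hc c hbc (by omega) (Finset.mem_of_mem_erase h)
      · intro x hx
        rcases Finset.mem_insert.mp hx with rfl | h
        · exact Finset.mem_Icc.mpr ⟨by omega, by omega⟩
        · exact hA (Finset.mem_of_mem_erase h)
    have hAe : A'.erase (a - 1) = A.erase a :=
      Finset.erase_insert (fun h => ha1 (Finset.mem_of_mem_erase h))
    rw [hAe] at hstep
    exact Relation.ReflTransGen.head (Or.inl hedge) hstep

lemma reach_same_card (n p : ℕ) (hp : 1 ≤ p) :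
    ∀ (s : ℕ) (M N : Finset ℕ), M.sum id ≤ s → M ⊆ Finset.Icc p n → N ⊆ Finset.Icc p n →
      N.card = M.card → (∀ t, fcnt M t ≤ fcnt N t) →
      Relation.ReflTransGen (fun M N => mayaM1 p n M N ∨ mayaM3 p n M N) M N := by
  intro s
  induction s with
  | zero =>
    intro M N hs hM hN hcard hf
    have hMempty : M = ∅ := by
      by_contra h
      obtain ⟨x, hx⟩ := Finset.nonempty_iff_ne_empty.mpr h
      have hx1 : 1 ≤ x := le_trans hp (Finset.mem_Icc.mp (hM hx)).1
      have hle : id x ≤ M.sum id := Finset.single_le_sum (fun i _ => Nat.zero_le _) hx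
      rw [show id x = x from rfl] at hle
      omega
    subst hMempty
    have : N = ∅ := Finset.card_eq_zero.mp (by simpa using hcard)
    rw [this]
  | succ s ih =>
    intro M N hs hM hN hcard hf
    by_cases hMN : M = N
    · rw [hMN]
    · have hex : ∃ t, fcnt M t < fcnt N t := by
        by_contra h
        push_neg at h
        exact hMN (eq_of_fcnt_eq hp hM hN (fun t => le_antisymm (hf t) (h t)))
      set t₀ := Nat.find hex with ht₀def
      have ht₀ : fcnt M t₀ < fcnt N t₀ := Nat.find_spec hex
      have ht₀min : ∀ t < t₀, fcnt M t = fcnt N t := fun t ht =>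
        le_antisymm (hf t) (le_of_not_gt (Nat.find_min hex ht))
      have ht₀pos : 1 ≤ t₀ := by
        rcases Nat.eq_zero_or_pos t₀ with h0 | h0
        · exfalso
          rw [h0] at ht₀
          have := fcnt_zero_of_subset hp hN
          omega
        · exact h0
      have hprev : fcnt M (t₀ - 1) = fcnt N (t₀ - 1) := ht₀min _ (by omega)
      have ht₀N : t₀ ∈ N := by
        by_contra h
        have hpN := fcnt_pred N ht₀pos
        rw [if_neg h, add_zero] at hpN
        have hm := fcnt_mono M (show t₀ - 1 ≤ t₀ from by omega)
        omega
      have ht₀M : t₀ ∉ M := by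
        intro h
        have h1 := fcnt_pred M ht₀pos
        have h2 := fcnt_pred N ht₀pos
        rw [if_pos h] at h1
        split_ifs at h2 <;> omega
      have hpt₀ : p ≤ t₀ := (Finset.mem_Icc.mp (hN ht₀N)).1
      have hSne : (M.filter (fun x => t₀ < x)).Nonempty := by
        by_contra h
        rw [Finset.not_nonempty_iff_eq_empty, Finset.filter_eq_empty_iff] at h
        have hself : M.filter (· ≤ t₀) = M :=
          Finset.filter_eq_self.mpr (fun x hx => le_of_not_gt (h hx))
        have h2 : fcnt M t₀ = M.card := by
          unfold fcnt
          rw [hself]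
        have h3 : fcnt N t₀ ≤ N.card := fcnt_le_card _ _
        omega
      set a := (M.filter (fun x => t₀ < x)).min' hSne with ha_def
      have haS : a ∈ M.filter (fun x => t₀ < x) := Finset.min'_mem _ _
      have haM : a ∈ M := (Finset.mem_filter.mp haS).1
      have hat₀ : t₀ < a := (Finset.mem_filter.mp haS).2
      have hmin : ∀ x ∈ M, t₀ < x → a ≤ x := fun x hx h =>
        Finset.min'_le _ _ (Finset.mem_filter.mpr ⟨hx, h⟩)
      have ha1M : a - 1 ∉ M := by
        intro h
        by_cases h' : t₀ < a - 1
        · have := hmin _ h h'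
          omega
        · have heq : a - 1 = t₀ := by omega
          rw [heq] at h
          exact ht₀M h
      have hedge := step_one n p hp M a hM haM ha1M (by omega)
      set M' := insert (a - 1) (M.erase a) with hM'def
      have haIcc := Finset.mem_Icc.mp (hM haM)
      have hM' : M' ⊆ Finset.Icc p n := by
        intro x hx
        rcases Finset.mem_insert.mp hx with rfl | hx
        · exact Finset.mem_Icc.mpr ⟨by omega, by omega⟩
        · exact hM (Finset.mem_of_mem_erase hx)
      have ha1eM : a - 1 ∉ M.erase a := fun h => ha1M (Finset.mem_of_mem_erase h)
      have hcard' : N.card = M'.card := by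
        rw [hM'def, Finset.card_insert_of_notMem ha1eM, Finset.card_erase_of_mem haM]
        have : 0 < M.card := Finset.card_pos.mpr ⟨_, haM⟩
        omega
      have hsum' : M'.sum id ≤ s := by
        have h1 : id a + (M.erase a).sum id = M.sum id := Finset.add_sum_erase M id haM
        have h2 : M'.sum id = id (a - 1) + (M.erase a).sum id := Finset.sum_insert ha1eM
        rw [show id a = a from rfl] at h1
        rw [show id (a - 1) = a - 1 from rfl] at h2
        omega
      have hf' : ∀ t, fcnt M' t ≤ fcnt N t := by
        intro t
        rw [hM'def, fcnt_insert ha1eM]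
        have hft := fcnt_erase haM t
        by_cases h1 : a ≤ t
        · rw [if_pos (show a - 1 ≤ t from by omega)]
          rw [if_pos h1] at hft
          have := hf t
          omega
        · by_cases h2 : a - 1 ≤ t
          · have hta : t = a - 1 := by omega
            rw [if_pos h2]
            rw [if_neg h1, add_zero] at hft
            have hkey : fcnt M t = fcnt M t₀ := by
              unfold fcnt
              congr 1
              ext x
              simp only [Finset.mem_filter]
              constructor
              · rintro ⟨hx, hxt⟩
                refine ⟨hx, ?_⟩
                by_contra h'
                have := hmin x hx (by omega)
                omega
              · rintro ⟨hx, hxt⟩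
                exact ⟨hx, by omega⟩
            have hNm : fcnt N t₀ ≤ fcnt N t := fcnt_mono N (by omega)
            omega
          · rw [if_neg h2, add_zero]
            rw [if_neg h1, add_zero] at hft
            have := hf t
            omega
      exact Relation.ReflTransGen.head (Or.inl hedge) (ih M' N hsum' hM' hN hcard' hf')

lemma reach_main (n p : ℕ) (hp : 1 ≤ p) (hpn : p ≤ n - 1) :
    ∀ (k : ℕ) (M N : Finset ℕ), M ⊆ Finset.Icc p n → N ⊆ Finset.Icc p n →
      N.card = M.card + 2 * k → (∀ t, fcnt M t ≤ fcnt N t) →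
      Relation.ReflTransGen (fun M N => mayaM1 p n M N ∨ mayaM3 p n M N) M N := by
  intro k
  induction k with
  | zero =>
    intro M N hM hN hcard hf
    exact reach_same_card n p hp (M.sum id) M N le_rfl hM hN (by omega) hf
  | succ k ih =>
    intro M N hM hN hcard hf
    have hn2 : 2 ≤ n := by omega
    have hNne : N.Nonempty := Finset.card_pos.mp (by omega)
    set b := N.max' hNne with hb_def
    have hbN : b ∈ N := N.max'_mem hNne
    have hN1card : (N.erase b).card = N.card - 1 := Finset.card_erase_of_mem hbN
    have hN1ne : (N.erase b).Nonempty := Finset.card_pos.mp (by omega)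
    set a := (N.erase b).max' hN1ne with ha_def
    have haN1 : a ∈ N.erase b := Finset.max'_mem _ _
    have haN : a ∈ N := Finset.mem_of_mem_erase haN1
    have hab : a ≠ b := (Finset.mem_erase.mp haN1).1
    have halt : a < b := lt_of_le_of_ne (N.le_max' a haN) hab
    have hbn : b ≤ n := (Finset.mem_Icc.mp (hN hbN)).2
    have hpa : p ≤ a := (Finset.mem_Icc.mp (hN haN)).1
    have hpb : p ≤ b := (Finset.mem_Icc.mp (hN hbN)).1
    set N' := (N.erase b).erase a with hN'_def
    have hN'sub : N' ⊆ N := subset_trans (Finset.erase_subset _ _) (Finset.erase_subset _ _)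
    have hN'Icc : N' ⊆ Finset.Icc p n := subset_trans hN'sub hN
    have hN'card : N'.card = M.card + 2 * k := by
      rw [hN'_def, Finset.card_erase_of_mem haN1, hN1card]
      omega
    have hxlt : ∀ x ∈ N', x < a := by
      intro x hx
      have hx1 : x ∈ N.erase b := Finset.mem_of_mem_erase hx
      have h1 := Finset.le_max' (N.erase b) x hx1
      have hxa : x ≠ a := (Finset.mem_erase.mp hx).1
      omega
    have hf' : ∀ t, fcnt M t ≤ fcnt N' t := by
      intro t
      by_cases h : a ≤ t
      · have hself : N'.filter (· ≤ t) = N' :=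
          Finset.filter_eq_self.mpr (fun x hx => le_of_lt (lt_of_lt_of_le (hxlt x hx) h))
        have h1 : fcnt N' t = N'.card := by
          unfold fcnt
          rw [hself]
        have h2 : fcnt M t ≤ M.card := fcnt_le_card _ _
        omega
      · have heq : N'.filter (· ≤ t) = N.filter (· ≤ t) := by
          ext x
          simp only [hN'_def, Finset.mem_filter, Finset.mem_erase]
          constructor
          · rintro ⟨⟨_, _, hx⟩, hxt⟩
            exact ⟨hx, hxt⟩
          · rintro ⟨hx, hxt⟩
            exact ⟨⟨by omega, by omega, hx⟩, hxt⟩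
        have h1 : fcnt N' t = fcnt N t := by
          unfold fcnt
          rw [heq]
        have := hf t
        omega
    have hpath1 := ih M N' hM hN'Icc hN'card hf'
    have hnN' : n ∉ N' := fun h => by have := hxlt n h; omega
    have hn1N' : n - 1 ∉ N' := fun h => by have := hxlt (n - 1) h; omega
    set N'' := insert (n - 1) (insert n N') with hN''_def
    have hn1nin : n - 1 ∉ insert n N' := by
      simp only [Finset.mem_insert]
      rintro (h | h)
      · omega
      · exact hn1N' h
    have hnnin : n ∉ insert a N' := by
      simp only [Finset.mem_insert]
      rintro (h | h)
      · omega
      · exact hnN' h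
    have hN''Icc : N'' ⊆ Finset.Icc p n := by
      intro x hx
      rw [hN''_def] at hx
      simp only [Finset.mem_insert] at hx
      rcases hx with rfl | rfl | hx
      · exact Finset.mem_Icc.mpr ⟨hpn, by omega⟩
      · exact Finset.mem_Icc.mpr ⟨by omega, le_rfl⟩
      · exact hN'Icc hx
    have hedge3 : mayaM3 p n N' N'' := by
      refine ⟨hN'Icc, hN''Icc, Finset.mem_insert_self _ _, ?_, ?_⟩
      · rw [hN''_def]
        exact Finset.mem_insert_of_mem (Finset.mem_insert_self _ _)
      · rw [hN''_def, Finset.erase_insert hn1nin, Finset.erase_insert hnN']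
    have hstep1 : Relation.ReflTransGen (fun M N => mayaM1 p n M N ∨ mayaM3 p n M N) N''
        (insert a (N''.erase (n - 1))) := by
      apply step_down n p hp (n - 1 - a) N'' (n - 1) a hN''Icc (Finset.mem_insert_self _ _) hpa
        (by omega)
      intro c hac hcn hcmem
      rw [hN''_def] at hcmem
      simp only [Finset.mem_insert] at hcmem
      rcases hcmem with rfl | rfl | h
      · omega
      · omega
      · exact absurd (hxlt c h) (by omega)
    have he1 : N''.erase (n - 1) = insert n N' := by
      rw [hN''_def, Finset.erase_insert hn1nin]
    have he3 : insert a N' = N.erase b := by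
      rw [hN'_def, Finset.insert_erase haN1]
    rw [he1, Finset.insert_comm] at hstep1
    rw [he3] at hstep1
    have hstep2 : Relation.ReflTransGen (fun M N => mayaM1 p n M N ∨ mayaM3 p n M N)
        (insert n (insert a N')) (insert b ((insert n (insert a N')).erase n)) := by
      apply step_down n p hp (n - b) _ n b ?_ (Finset.mem_insert_self _ _) hpb (by omega)
      · intro c hbc hcn hcmem
        simp only [Finset.mem_insert] at hcmem
        rcases hcmem with rfl | rfl | h
        · omega
        · omega
        · exact absurd (hxlt c h) (by omega)
      · intro x hx
        simp only [Finset.mem_insert] at hx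
        rcases hx with rfl | rfl | h
        · exact Finset.mem_Icc.mpr ⟨by omega, le_rfl⟩
        · exact Finset.mem_Icc.mpr ⟨hpa, by omega⟩
        · exact hN'Icc h
    have he2 : (insert n (insert a N')).erase n = insert a N' := Finset.erase_insert hnnin
    have he4 : insert b (N.erase b) = N := Finset.insert_erase hbN
    rw [he2, he3, he4] at hstep2
    have hor : mayaM1 p n N' N'' ∨ mayaM3 p n N' N'' := Or.inr hedge3
    exact hpath1.trans ((Relation.ReflTransGen.head (r := fun M N => mayaM1 p n M N ∨ mayaM3 p n M N) hor hstep1).trans hstep2)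

/-- For the directed graph on subsets of the interval `J = [p,n] ⊆ [n]`
(with `n−1, n ∈ J`) with edges of types (M1) and (M3), and `M = {m_1 < ⋯ < m_r}`,
`N = {n_1 < ⋯ < n_s}`, there is a directed path from `M` to `N` if and only if
`s − r` is a nonnegative even integer and `m_ν ≥ n_ν` for all `ν ∈ [r]`. -/
theorem maya_reachability_typeD (n p : ℕ) (hp : 1 ≤ p) (hpn : p ≤ n - 1)
    (M N : Finset ℕ) (hM : M ⊆ Finset.Icc p n) (hN : N ⊆ Finset.Icc p n) :
    Relation.ReflTransGen (fun M N => mayaM1 p n M N ∨ mayaM3 p n M N) M N ↔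
      ((∃ k : ℕ, N.card = M.card + 2 * k) ∧
        ∀ k < M.card, (N.sort (· ≤ ·)).getD k 0 ≤ (M.sort (· ≤ ·)).getD k 0) := by
  constructor
  · intro h
    clear hM hN
    have key : (∃ k : ℕ, N.card = M.card + 2 * k) ∧ ∀ t, fcnt M t ≤ fcnt N t := by
      induction h with
      | refl => exact ⟨⟨0, by omega⟩, fun t => le_rfl⟩
      | tail hAB hedge ih =>
        obtain ⟨⟨k, hk⟩, hfM⟩ := ih
        rcases hedge with h1 | h3
        · obtain ⟨hc, hfc⟩ := m1_facts h1
          exact ⟨⟨k, by omega⟩, fun t => le_trans (hfM t) (hfc t)⟩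
        · obtain ⟨hc, hfc⟩ := m3_facts hp h3
          exact ⟨⟨k + 1, by omega⟩, fun t => le_trans (hfM t) (hfc t)⟩
    obtain ⟨⟨k, hk⟩, hfM⟩ := key
    exact ⟨⟨k, hk⟩, (dom_iff M N (by omega)).mpr hfM⟩
  · rintro ⟨⟨k, hk⟩, hdom⟩
    exact reach_main n p hp hpn k M N hM hN hk ((dom_iff M N (by omega)).mp hdom)
end
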